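/- arXiv:2510.25569 — 6 statements merged into one kernel-verified Lean document; each statement's English description precedes it below -/
import Mathlib

section
/- Let D be a probability distribution over X×Y, h ∈ H a fixed hypothesis, and δ₁, δ₂, δ₃ ∈ [0,1]. Suppose L̃_S^Q, b̃_S^Q and c̃_S^Q are sample-dependent quantities such that: (1) with probability at least 1−δ₁ over S~D^m, for all Q over H, E_{h'~Q} L_D(h') ≤ L̃_S^Q; (2) with probability at least 1−δ₂ over S~D^m, for all Q over H, b_D^Q(h) ≥ b̃_S^Q; (3) with probability at least 1−δ₃ over S~D^m, for all Q over H, c_D^Q(h) ≥ c̃_S^Q; and (4) c̃_S^Q > b̃_S^Q. Then with probability at least 1−(δ₁+δ₂+δ₃) over S~D^m, for all Q over H: L_D(h) ≤ (L̃_S^Q − b̃_S^Q)/(c̃_S^Q − b̃_S^Q). -/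
/-!
STATEMENT 4 (Triple bound -- single hypothesis).
Given sample-dependent quantities `L̃ b̃ c̃` with
(1) `P_{S∼D^m}(∀Q, E_{h'∼Q}L_D(h') ≤ L̃_S^Q) ≥ 1−δ₁`,
(2) `P_{S∼D^m}(∀Q, b_D^Q(h) ≥ b̃_S^Q) ≥ 1−δ₂`,
(3) `P_{S∼D^m}(∀Q, c_D^Q(h) ≥ c̃_S^Q) ≥ 1−δ₃`,
(4) `c̃_S^Q > b̃_S^Q`, we get
`P_{S∼D^m}(∀Q, L_D(h) ≤ (L̃_S^Q − b̃_S^Q)/(c̃_S^Q − b̃_S^Q)) ≥ 1−(δ₁+δ₂+δ₃)`.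
-/

open MeasureTheory ProbabilityTheory
open scoped ENNReal

/-- The deterministic risk `L_D(h) = E_{(x,y)∼D} ℓ(h(x),y)`. -/
noncomputable def detRisk {X Y H : Type*} [MeasurableSpace X] [MeasurableSpace Y]
    (D : Measure (X × Y)) (ℓ : H → X × Y → ℝ) (h : H) : ℝ :=
  ∫ z, ℓ h z ∂D

/-- The stochastic risk `E_{h'∼Q} L_D(h')`. -/
noncomputable def stochRisk {X Y H : Type*} [MeasurableSpace X] [MeasurableSpace Y]
    [MeasurableSpace H] (D : Measure (X × Y)) (Q : Measure H) (ℓ : H → X × Y → ℝ) : ℝ :=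
  ∫ h', (∫ z, ℓ h' z ∂D) ∂Q

/-- `b_D^Q(h)`: the stochastic risk conditioned on `h`'s correct predictions. -/
noncomputable def bRisk {X Y H : Type*} [MeasurableSpace X] [MeasurableSpace Y]
    [MeasurableSpace H] (D : Measure (X × Y)) (Q : Measure H) (ℓ : H → X × Y → ℝ) (h : H) : ℝ :=
  ∫ z, (∫ h', ℓ h' z ∂Q) ∂(D[|{z | ℓ h z = 0}])

/-- `c_D^Q(h)`: the stochastic risk conditioned on `h`'s incorrect predictions. -/
noncomputable def cRisk {X Y H : Type*} [MeasurableSpace X] [MeasurableSpace Y]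
    [MeasurableSpace H] (D : Measure (X × Y)) (Q : Measure H) (ℓ : H → X × Y → ℝ) (h : H) : ℝ :=
  ∫ z, (∫ h', ℓ h' z ∂Q) ∂(D[|{z | ℓ h z = 1}])

section Aux

variable {X Y H : Type*} [MeasurableSpace X] [MeasurableSpace Y] [MeasurableSpace H]

lemma detRisk_eq_measure (D : Measure (X × Y)) [IsProbabilityMeasure D]
    (ℓ : H → X × Y → ℝ) (hbin : ∀ h' z, ℓ h' z = 0 ∨ ℓ h' z = 1)
    (hmeas : Measurable fun p : H × (X × Y) => ℓ p.1 p.2) (h : H) :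
    detRisk D ℓ h = (D {z | ℓ h z = 1}).toReal := by
  have hmz : Measurable fun z => ℓ h z := hmeas.comp measurable_prodMk_left
  have hset : MeasurableSet {z | ℓ h z = 1} := hmz (measurableSet_singleton 1)
  have hfun : (fun z => ℓ h z)
      = Set.indicator {z | ℓ h z = 1} (fun _ => (1 : ℝ)) := by
    funext z
    rcases hbin h z with h0 | h1
    · have : z ∉ {z | ℓ h z = 1} := by simp [Set.mem_setOf_eq, h0]
      simp [Set.indicator_of_notMem this, h0]
    · have : z ∈ {z | ℓ h z = 1} := h1
      simp [Set.indicator_of_mem this, h1]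
  rw [detRisk, hfun, integral_indicator_const _ hset]
  simp [measureReal_def]

lemma stochRisk_decomp (D : Measure (X × Y)) [IsProbabilityMeasure D]
    (ℓ : H → X × Y → ℝ) (hbin : ∀ h' z, ℓ h' z = 0 ∨ ℓ h' z = 1)
    (hmeas : Measurable fun p : H × (X × Y) => ℓ p.1 p.2) (h : H)
    (hpos0 : D {z | ℓ h z = 0} ≠ 0) (hpos1 : D {z | ℓ h z = 1} ≠ 0)
    (Q : Measure H) [IsProbabilityMeasure Q] :
    stochRisk D Q ℓ = (D {z | ℓ h z = 0}).toReal * bRisk D Q ℓ h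
      + (D {z | ℓ h z = 1}).toReal * cRisk D Q ℓ h := by
  have hmz : Measurable fun z => ℓ h z := hmeas.comp measurable_prodMk_left
  have hA0 : MeasurableSet {z | ℓ h z = 0} := hmz (measurableSet_singleton 0)
  have hA1 : MeasurableSet {z | ℓ h z = 1} := hmz (measurableSet_singleton 1)
  have hcompl : {z | ℓ h z = 0}ᶜ = {z | ℓ h z = 1} := by
    ext z
    rcases hbin h z with hc | hc <;> simp [Set.mem_setOf_eq, hc]
  -- integrability of uncurried ℓ on the product
  have hint : Integrable (fun p : H × (X × Y) => ℓ p.1 p.2) (Q.prod D) := by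
    refine (integrable_const (1 : ℝ)).mono' hmeas.aestronglyMeasurable ?_
    refine Filter.Eventually.of_forall fun p => ?_
    rcases hbin p.1 p.2 with hc | hc <;> simp [hc]
  -- Fubini
  have hswap : stochRisk D Q ℓ = ∫ z, (∫ h', ℓ h' z ∂Q) ∂D := by
    rw [stochRisk]
    exact integral_integral_swap hint
  -- integrability of the inner integral over D
  have hgmeas : StronglyMeasurable fun z : X × Y => ∫ h', ℓ h' z ∂Q :=
    hmeas.stronglyMeasurable.integral_prod_left
  have hgint : Integrable (fun z : X × Y => ∫ h', ℓ h' z ∂Q) D := by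
    refine (integrable_const (1 : ℝ)).mono' hgmeas.aestronglyMeasurable ?_
    refine Filter.Eventually.of_forall fun z => ?_
    calc ‖∫ h', ℓ h' z ∂Q‖ ≤ ∫ h', ‖ℓ h' z‖ ∂Q := norm_integral_le_integral_norm _
      _ ≤ ∫ _, (1 : ℝ) ∂Q := by
          refine integral_mono_of_nonneg (Filter.Eventually.of_forall fun h' => norm_nonneg _)
            (integrable_const 1) (Filter.Eventually.of_forall fun h' => ?_)
          rcases hbin h' z with hc | hc <;> simp [hc]
      _ = 1 := by simp
  have hsplit : ∫ z, (∫ h', ℓ h' z ∂Q) ∂D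
      = (∫ z in {z | ℓ h z = 0}, (∫ h', ℓ h' z ∂Q) ∂D)
        + (∫ z in {z | ℓ h z = 1}, (∫ h', ℓ h' z ∂Q) ∂D) := by
    rw [← hcompl]
    exact (integral_add_compl hA0 hgint).symm
  have hb : (D {z | ℓ h z = 0}).toReal * bRisk D Q ℓ h
      = ∫ z in {z | ℓ h z = 0}, (∫ h', ℓ h' z ∂Q) ∂D := by
    rw [bRisk, ProbabilityTheory.cond, integral_smul_measure, ENNReal.toReal_inv, smul_eq_mul,
      ← mul_assoc, mul_inv_cancel₀ (ENNReal.toReal_ne_zero.mpr ⟨hpos0, measure_ne_top D _⟩),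
      one_mul]
  have hc : (D {z | ℓ h z = 1}).toReal * cRisk D Q ℓ h
      = ∫ z in {z | ℓ h z = 1}, (∫ h', ℓ h' z ∂Q) ∂D := by
    rw [cRisk, ProbabilityTheory.cond, integral_smul_measure, ENNReal.toReal_inv, smul_eq_mul,
      ← mul_assoc, mul_inv_cancel₀ (ENNReal.toReal_ne_zero.mpr ⟨hpos1, measure_ne_top D _⟩),
      one_mul]
  rw [hswap, hsplit, hb, hc]

end Aux

theorem triple_bound_single_hypothesis
    {X Y H : Type*} [MeasurableSpace X] [MeasurableSpace Y] [MeasurableSpace H]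
    (D : Measure (X × Y)) [IsProbabilityMeasure D]
    (ℓ : H → X × Y → ℝ)
    (hbin : ∀ h' z, ℓ h' z = 0 ∨ ℓ h' z = 1)
    (hmeas : Measurable fun p : H × (X × Y) => ℓ p.1 p.2)
    (h : H)
    (hpos0 : D {z | ℓ h z = 0} ≠ 0)
    (hpos1 : D {z | ℓ h z = 1} ≠ 0)
    (hsandwich : ∀ Q : Measure H, IsProbabilityMeasure Q →
      (bRisk D Q ℓ h ≤ stochRisk D Q ℓ ∧ stochRisk D Q ℓ ≤ cRisk D Q ℓ h) ∨
      (cRisk D Q ℓ h ≤ stochRisk D Q ℓ ∧ stochRisk D Q ℓ ≤ bRisk D Q ℓ h))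
    (m : ℕ) (δ₁ δ₂ δ₃ : ℝ)
    (hδ₁ : 0 ≤ δ₁ ∧ δ₁ ≤ 1) (hδ₂ : 0 ≤ δ₂ ∧ δ₂ ≤ 1) (hδ₃ : 0 ≤ δ₃ ∧ δ₃ ≤ 1)
    (Lt bt ct : (Fin m → X × Y) → Measure H → ℝ)
    (hA1meas : MeasurableSet {S : Fin m → X × Y |
      ∀ Q : Measure H, IsProbabilityMeasure Q → stochRisk D Q ℓ ≤ Lt S Q})
    (hA2meas : MeasurableSet {S : Fin m → X × Y |
      ∀ Q : Measure H, IsProbabilityMeasure Q → bt S Q ≤ bRisk D Q ℓ h})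
    (hA3meas : MeasurableSet {S : Fin m → X × Y |
      ∀ Q : Measure H, IsProbabilityMeasure Q → ct S Q ≤ cRisk D Q ℓ h})
    (h1 : 1 - ENNReal.ofReal δ₁ ≤ Measure.pi (fun _ : Fin m => D)
      {S | ∀ Q : Measure H, IsProbabilityMeasure Q → stochRisk D Q ℓ ≤ Lt S Q})
    (h2 : 1 - ENNReal.ofReal δ₂ ≤ Measure.pi (fun _ : Fin m => D)
      {S | ∀ Q : Measure H, IsProbabilityMeasure Q → bt S Q ≤ bRisk D Q ℓ h})
    (h3 : 1 - ENNReal.ofReal δ₃ ≤ Measure.pi (fun _ : Fin m => D)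
      {S | ∀ Q : Measure H, IsProbabilityMeasure Q → ct S Q ≤ cRisk D Q ℓ h})
    (h4 : ∀ S : Fin m → X × Y, ∀ Q : Measure H, IsProbabilityMeasure Q → bt S Q < ct S Q) :
    1 - ENNReal.ofReal (δ₁ + δ₂ + δ₃) ≤ Measure.pi (fun _ : Fin m => D)
      {S | ∀ Q : Measure H, IsProbabilityMeasure Q →
        detRisk D ℓ h ≤ (Lt S Q - bt S Q) / (ct S Q - bt S Q)} := by
  classical
  set P := Measure.pi (fun _ : Fin m => D) with hPdef
  haveI : IsProbabilityMeasure P := by rw [hPdef]; infer_instance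
  set A : Set (Fin m → X × Y) := {S | ∀ Q : Measure H, IsProbabilityMeasure Q →
    stochRisk D Q ℓ ≤ Lt S Q} with hAdef
  set B : Set (Fin m → X × Y) := {S | ∀ Q : Measure H, IsProbabilityMeasure Q →
    bt S Q ≤ bRisk D Q ℓ h} with hBdef
  set C : Set (Fin m → X × Y) := {S | ∀ Q : Measure H, IsProbabilityMeasure Q →
    ct S Q ≤ cRisk D Q ℓ h} with hCdef
  -- pointwise argument
  have hmz : Measurable fun z => ℓ h z := hmeas.comp measurable_prodMk_left
  have hA1set : MeasurableSet {z | ℓ h z = 1} := hmz (measurableSet_singleton 1)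
  have hcompl : {z | ℓ h z = 1}ᶜ = {z | ℓ h z = 0} := by
    ext z
    rcases hbin h z with hc | hc <;> simp [Set.mem_setOf_eq, hc]
  have hsub : A ∩ B ∩ C ⊆ {S | ∀ Q : Measure H, IsProbabilityMeasure Q →
      detRisk D ℓ h ≤ (Lt S Q - bt S Q) / (ct S Q - bt S Q)} := by
    rintro S ⟨⟨hSA, hSB⟩, hSC⟩ Q hQ
    haveI := hQ
    have hdec := stochRisk_decomp D ℓ hbin hmeas h hpos0 hpos1 Q
    have hdet := detRisk_eq_measure D ℓ hbin hmeas h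
    set L : ℝ := (D {z | ℓ h z = 1}).toReal with hLdef
    have hL0 : 0 ≤ L := ENNReal.toReal_nonneg
    have hL1 : L ≤ 1 := by
      rw [hLdef]
      exact ENNReal.toReal_le_of_le_ofReal one_pos.le (by simpa using prob_le_one)
    have hsum : (D {z | ℓ h z = 0}).toReal = 1 - L := by
      have h1' : D {z | ℓ h z = 1} + D {z | ℓ h z = 1}ᶜ = 1 := by
        have := measure_add_measure_compl (μ := D) hA1set
        rwa [measure_univ] at this
      rw [hcompl] at h1'
      have := congrArg ENNReal.toReal h1'
      rw [ENNReal.toReal_add (measure_ne_top D _) (measure_ne_top D _)] at this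
      simp only [ENNReal.toReal_one] at this
      linarith [this]
    have hLt := hSA Q hQ
    have hbt := hSB Q hQ
    have hct := hSC Q hQ
    have hlt := h4 S Q hQ
    rw [hdet]
    rw [le_div_iff₀ (by linarith : (0:ℝ) < ct S Q - bt S Q)]
    rw [hdec, hsum, ← hdet] at hLt
    rw [hdet] at hLt
    nlinarith [mul_le_mul_of_nonneg_left hbt (by linarith : (0:ℝ) ≤ 1 - L),
      mul_le_mul_of_nonneg_left hct hL0]
  -- union bound
  have hAc : P Aᶜ ≤ ENNReal.ofReal δ₁ := by
    rw [prob_compl_eq_one_sub hA1meas]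
    calc 1 - P A ≤ 1 - (1 - ENNReal.ofReal δ₁) := tsub_le_tsub le_rfl h1
      _ = ENNReal.ofReal δ₁ :=
        ENNReal.sub_sub_cancel ENNReal.one_ne_top (ENNReal.ofReal_le_one.mpr hδ₁.2)
  have hBc : P Bᶜ ≤ ENNReal.ofReal δ₂ := by
    rw [prob_compl_eq_one_sub hA2meas]
    calc 1 - P B ≤ 1 - (1 - ENNReal.ofReal δ₂) := tsub_le_tsub le_rfl h2
      _ = ENNReal.ofReal δ₂ :=
        ENNReal.sub_sub_cancel ENNReal.one_ne_top (ENNReal.ofReal_le_one.mpr hδ₂.2)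
  have hCc : P Cᶜ ≤ ENNReal.ofReal δ₃ := by
    rw [prob_compl_eq_one_sub hA3meas]
    calc 1 - P C ≤ 1 - (1 - ENNReal.ofReal δ₃) := tsub_le_tsub le_rfl h3
      _ = ENNReal.ofReal δ₃ :=
        ENNReal.sub_sub_cancel ENNReal.one_ne_top (ENNReal.ofReal_le_one.mpr hδ₃.2)
  have hunion : P ((A ∩ B ∩ C)ᶜ) ≤ ENNReal.ofReal (δ₁ + δ₂ + δ₃) := by
    rw [Set.compl_inter, Set.compl_inter]
    calc P (Aᶜ ∪ Bᶜ ∪ Cᶜ) ≤ P (Aᶜ ∪ Bᶜ) + P Cᶜ := measure_union_le _ _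
      _ ≤ (P Aᶜ + P Bᶜ) + P Cᶜ := add_le_add_left (measure_union_le _ _) _
      _ ≤ (ENNReal.ofReal δ₁ + ENNReal.ofReal δ₂) + ENNReal.ofReal δ₃ :=
        add_le_add (add_le_add hAc hBc) hCc
      _ = ENNReal.ofReal (δ₁ + δ₂ + δ₃) := by
        rw [← ENNReal.ofReal_add hδ₁.1 hδ₂.1, ← ENNReal.ofReal_add (by linarith [hδ₁.1, hδ₂.1]) hδ₃.1]
  have hABCmeas : MeasurableSet (A ∩ B ∩ C) := (hA1meas.inter hA2meas).inter hA3meas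
  have hABC : 1 - ENNReal.ofReal (δ₁ + δ₂ + δ₃) ≤ P (A ∩ B ∩ C) := by
    have hco : P ((A ∩ B ∩ C)ᶜ) = 1 - P (A ∩ B ∩ C) := prob_compl_eq_one_sub hABCmeas
    rw [hco] at hunion
    exact tsub_le_iff_right.mpr
      ((tsub_le_iff_right.mp hunion).trans_eq (add_comm _ _))
  exact le_trans hABC (measure_mono hsub)
end

section
/- Let D be a probability distribution over X×Y and δ ∈ [0,1]. Suppose L̃_S^Q, b̃_S^Q and c̃_S^Q are such that: (1) with probability at least 1−δ over S~D^m, for all Q over H, E_{h'~Q} L_D(h') ≤ L̃_S^Q; (2) deterministically, for all Q over H and all h ∈ H, b_D^Q(h) ≥ b̃_S^Q and c_D^Q(h) ≥ c̃_S^Q; and (3) c̃_S^Q > b̃_S^Q. Then with probability at least 1−δ over S~D^m, simultaneously for all Q over H and all h ∈ H: L_D(h) ≤ (L̃_S^Q − b̃_S^Q)/(c̃_S^Q − b̃_S^Q). -/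
/-!
STATEMENT 5 (Triple bound).
Given (1) `P_{S∼D^m}(∀Q, E_{h'∼Q}L_D(h') ≤ L̃_S^Q) ≥ 1−δ`,
(2) deterministically, for all `Q` and all `h`, `b_D^Q(h) ≥ b̃_S^Q` and
`c_D^Q(h) ≥ c̃_S^Q`, and (3) `c̃_S^Q > b̃_S^Q`, we get
`P_{S∼D^m}(∀Q ∀h, L_D(h) ≤ (L̃_S^Q − b̃_S^Q)/(c̃_S^Q − b̃_S^Q)) ≥ 1−δ`.
-/

open MeasureTheory ProbabilityTheory
open scoped ENNReal

lemma triple_decomp {X Y H : Type*} [MeasurableSpace X] [MeasurableSpace Y] [MeasurableSpace H]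
    (D : Measure (X × Y)) [IsProbabilityMeasure D] (ℓ : H → X × Y → ℝ)
    (hbin : ∀ h' z, ℓ h' z = 0 ∨ ℓ h' z = 1)
    (hmeas : Measurable fun p : H × (X × Y) => ℓ p.1 p.2)
    (hpos : ∀ h : H, D {z | ℓ h z = 0} ≠ 0 ∧ D {z | ℓ h z = 1} ≠ 0)
    (Q : Measure H) (hQ : IsProbabilityMeasure Q) (h : H) :
    stochRisk D Q ℓ = (1 - detRisk D ℓ h) * bRisk D Q ℓ h + detRisk D ℓ h * cRisk D Q ℓ h
      ∧ 0 ≤ detRisk D ℓ h ∧ detRisk D ℓ h ≤ 1 := by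
  have hℓh : Measurable (fun z => ℓ h z) := hmeas.comp measurable_prodMk_left
  set A : Set (X × Y) := {z | ℓ h z = 0} with hAdef
  set B : Set (X × Y) := {z | ℓ h z = 1} with hBdef
  have hA : MeasurableSet A := hℓh (measurableSet_singleton 0)
  have hB : MeasurableSet B := hℓh (measurableSet_singleton 1)
  have hBA : B = Aᶜ := by
    ext z
    rcases hbin h z with h0 | h0
    · simp [hAdef, hBdef, h0]
    · simp [hAdef, hBdef, h0]
  have hind : (fun z => ℓ h z) = B.indicator (fun _ => (1:ℝ)) := by
    funext z
    rcases hbin h z with h0 | h0 <;>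
      simp [hBdef, Set.indicator, h0]
  have hL : detRisk D ℓ h = (D B).toReal := by
    rw [detRisk, hind, integral_indicator_const _ hB]; simp [Measure.real]
  have hAB : (D A).toReal + (D B).toReal = 1 := by
    rw [hBA]
    have h1 : D A + D Aᶜ = 1 := by
      rw [measure_add_measure_compl hA]; simp
    have := ENNReal.toReal_add (measure_ne_top D A) (measure_ne_top D Aᶜ)
    rw [← this, h1]; simp
  have hL0 : 0 ≤ detRisk D ℓ h := by rw [hL]; positivity
  have hL1 : detRisk D ℓ h ≤ 1 := by
    rw [hL]
    have := ENNReal.toReal_mono (by norm_num) (prob_le_one (μ := D) (s := B))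
    simpa using this
  -- measurability and integrability of G
  set G : X × Y → ℝ := fun z => ∫ h', ℓ h' z ∂Q with hGdef
  have hℓnn : ∀ h' z, 0 ≤ ℓ h' z := fun h' z => by rcases hbin h' z with h0|h0 <;> rw [h0] <;> norm_num
  have hℓ1 : ∀ h' z, ℓ h' z ≤ 1 := fun h' z => by rcases hbin h' z with h0|h0 <;> rw [h0] <;> norm_num
  have hGsm : StronglyMeasurable G := hmeas.stronglyMeasurable.integral_prod_left'
  have hG0 : ∀ z, 0 ≤ G z := fun z => integral_nonneg (fun h' => hℓnn h' z)
  have hG1 : ∀ z, G z ≤ 1 := by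
    intro z
    calc G z ≤ ∫ _, (1:ℝ) ∂Q := by
          apply integral_mono_of_nonneg (Filter.Eventually.of_forall (fun h' => hℓnn h' z))
            (integrable_const 1) (Filter.Eventually.of_forall (fun h' => hℓ1 h' z))
      _ = 1 := by simp
  have hGint : Integrable G D := by
    refine Integrable.mono' (integrable_const 1) hGsm.aestronglyMeasurable ?_
    exact Filter.Eventually.of_forall fun z => by
      rw [Real.norm_eq_abs, abs_of_nonneg (hG0 z)]; exact hG1 z
  -- Fubini
  have hswap : stochRisk D Q ℓ = ∫ z, G z ∂D := by
    rw [stochRisk]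
    apply integral_integral_swap
    refine Integrable.mono' (integrable_const 1) hmeas.aestronglyMeasurable ?_
    exact Filter.Eventually.of_forall fun p => by
      simp only [Function.uncurry, Real.norm_eq_abs]
      rw [abs_of_nonneg (hℓnn p.1 p.2)]; exact hℓ1 p.1 p.2
  have hsplit : ∫ z, G z ∂D = (∫ z in A, G z ∂D) + ∫ z in B, G z ∂D := by
    rw [hBA, integral_add_compl hA hGint]
  -- conditional integrals
  have hbR : bRisk D Q ℓ h = (D A).toReal⁻¹ * ∫ z in A, G z ∂D := by
    rw [bRisk]
    show ∫ z, G z ∂(D[|A]) = _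
    rw [ProbabilityTheory.cond, integral_smul_measure, ENNReal.toReal_inv, smul_eq_mul]
  have hcR : cRisk D Q ℓ h = (D B).toReal⁻¹ * ∫ z in B, G z ∂D := by
    rw [cRisk]
    show ∫ z, G z ∂(D[|B]) = _
    rw [ProbabilityTheory.cond, integral_smul_measure, ENNReal.toReal_inv, smul_eq_mul]
  have hDA0 : (D A).toReal ≠ 0 :=
    ENNReal.toReal_ne_zero.mpr ⟨(hpos h).1, measure_ne_top D A⟩
  have hDB0 : (D B).toReal ≠ 0 :=
    ENNReal.toReal_ne_zero.mpr ⟨(hpos h).2, measure_ne_top D B⟩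
  refine ⟨?_, hL0, hL1⟩
  have h1L : 1 - detRisk D ℓ h = (D A).toReal := by rw [hL]; linarith
  rw [hswap, hsplit, hbR, hcR, h1L, hL]
  field_simp

theorem triple_bound
    {X Y H : Type*} [MeasurableSpace X] [MeasurableSpace Y] [MeasurableSpace H]
    (D : Measure (X × Y)) [IsProbabilityMeasure D]
    (ℓ : H → X × Y → ℝ)
    (hbin : ∀ h' z, ℓ h' z = 0 ∨ ℓ h' z = 1)
    (hmeas : Measurable fun p : H × (X × Y) => ℓ p.1 p.2)
    (hpos : ∀ h : H, D {z | ℓ h z = 0} ≠ 0 ∧ D {z | ℓ h z = 1} ≠ 0)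
    (hsandwich : ∀ (Q : Measure H), IsProbabilityMeasure Q → ∀ h : H,
      (bRisk D Q ℓ h ≤ stochRisk D Q ℓ ∧ stochRisk D Q ℓ ≤ cRisk D Q ℓ h) ∨
      (cRisk D Q ℓ h ≤ stochRisk D Q ℓ ∧ stochRisk D Q ℓ ≤ bRisk D Q ℓ h))
    (m : ℕ) (δ : ℝ) (hδ0 : 0 ≤ δ) (hδ1 : δ ≤ 1)
    (Lt bt ct : (Fin m → X × Y) → Measure H → ℝ)
    (hA1meas : MeasurableSet {S : Fin m → X × Y |
      ∀ Q : Measure H, IsProbabilityMeasure Q → stochRisk D Q ℓ ≤ Lt S Q})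
    (h1 : 1 - ENNReal.ofReal δ ≤ Measure.pi (fun _ : Fin m => D)
      {S | ∀ Q : Measure H, IsProbabilityMeasure Q → stochRisk D Q ℓ ≤ Lt S Q})
    (h2 : ∀ (S : Fin m → X × Y) (Q : Measure H), IsProbabilityMeasure Q → ∀ h : H,
      bt S Q ≤ bRisk D Q ℓ h ∧ ct S Q ≤ cRisk D Q ℓ h)
    (h3 : ∀ (S : Fin m → X × Y) (Q : Measure H), IsProbabilityMeasure Q → bt S Q < ct S Q) :
    1 - ENNReal.ofReal δ ≤ Measure.pi (fun _ : Fin m => D)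
      {S | ∀ Q : Measure H, IsProbabilityMeasure Q → ∀ h : H,
        detRisk D ℓ h ≤ (Lt S Q - bt S Q) / (ct S Q - bt S Q)} := by
  refine le_trans h1 (measure_mono ?_)
  intro S hS Q hQ h
  obtain ⟨hdec, hL0, hL1⟩ := triple_decomp D ℓ hbin hmeas hpos Q hQ h
  have hSQ : stochRisk D Q ℓ ≤ Lt S Q := hS Q hQ
  obtain ⟨hb, hc⟩ := h2 S Q hQ h
  have hbc : bt S Q < ct S Q := h3 S Q hQ
  rw [le_div_iff₀ (by linarith)]
  nlinarith [mul_nonneg (by linarith : (0:ℝ) ≤ 1 - detRisk D ℓ h) (by linarith : (0:ℝ) ≤ bRisk D Q ℓ h - bt S Q),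
    mul_nonneg hL0 (by linarith : (0:ℝ) ≤ cRisk D Q ℓ h - ct S Q)]
end

section
/- Let p ∈ [0,1]^n with Σ_i p_i = 1 and let C(p) be the Categorical distribution over the standard basis vectors of R^n with probabilities p. Let {p₁, p₂} be an optimal solution of the partition problem applied to p. Then for any data distribution D over X×Y: c_D^{C(p)}(h_p) ≥ max( Σ_{p∈p₁} p, Σ_{p∈p₂} p ). -/
/-!
STATEMENT 10 (Weights partitioning lower bound -- Categorical).
For `p ∈ [0,1]^n` with `∑ p_i = 1`, `C(p)` the Categorical distribution on the
standard basis vectors of `ℝ^n`, and `{p₁,p₂}` (encoded by `T` and `Tᶜ`) an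
optimal solution of the partition problem applied to `p`:
`c_D^{C(p)}(h_p) ≥ max(∑_{p∈p₁} p, ∑_{p∈p₂} p)`.
-/

open MeasureTheory ProbabilityTheory
open scoped ENNReal

/-- Majority-vote loss with threshold `θ`:
`ℓ(h_w(x),y) = 1{∑_i w_i·1{f_i(x) ≠ y} ≥ θ}`. -/
noncomputable def mvLoss {X Y : Type*} [DecidableEq Y] {n : ℕ} (f : Fin n → X → Y)
    (θ : ℝ) (w : Fin n → ℝ) (x : X) (y : Y) : ℝ :=
  if θ ≤ ∑ i, w i * (if f i x ≠ y then 1 else 0) then 1 else 0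

/-- The Categorical distribution `C(p)` over the standard basis vectors of `ℝ^n`. -/
noncomputable def catMeasure {n : ℕ} (p : Fin n → ℝ) : Measure (Fin n → ℝ) :=
  ∑ i, ENNReal.ofReal (p i) • Measure.dirac (Pi.single i (1 : ℝ))

theorem categorical_partition_lower_bound
    {X Y : Type*} [MeasurableSpace X] [MeasurableSpace Y] [DecidableEq Y]
    {n : ℕ} (f : Fin n → X → Y) (p : Fin n → ℝ)
    (hp : ∀ i, 0 ≤ p i ∧ p i ≤ 1) (hsum : ∑ i, p i = 1)
    (T : Finset (Fin n))
    (hT : ∀ T' : Finset (Fin n),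
      |(∑ i ∈ T, p i) - ∑ i ∈ Tᶜ, p i| ≤ |(∑ i ∈ T', p i) - ∑ i ∈ T'ᶜ, p i|)
    (D : Measure (X × Y)) [IsProbabilityMeasure D]
    (hmeas : ∀ w : Fin n → ℝ, Measurable fun z : X × Y => mvLoss f (1 / 2) w z.1 z.2)
    (hpos1 : D {z | mvLoss f (1 / 2) p z.1 z.2 = 1} ≠ 0) :
    max (∑ i ∈ T, p i) (∑ i ∈ Tᶜ, p i)
      ≤ ∫ z, (∫ w, mvLoss f (1 / 2) w z.1 z.2 ∂(catMeasure p))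
          ∂(D[|{z | mvLoss f (1 / 2) p z.1 z.2 = 1}]) := by
  classical
  set s : Set (X × Y) := {z | mvLoss f (1 / 2) p z.1 z.2 = 1} with hs_def
  -- basis vector loss identity
  have hbasis : ∀ (i : Fin n) (x : X) (y : Y),
      mvLoss f (1 / 2) (Pi.single i (1 : ℝ)) x y
        = (if f i x ≠ y then (1:ℝ) else 0) := by
    intro i x y
    unfold mvLoss
    have hsumi : (∑ j, (Pi.single i (1:ℝ) : Fin n → ℝ) j * (if f j x ≠ y then (1:ℝ) else 0))
        = (if f i x ≠ y then (1:ℝ) else 0) := by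
      simp only [Pi.single_apply, ite_mul, one_mul, zero_mul]
      simp only [Finset.sum_ite_eq', Finset.mem_univ, if_true]
    rw [hsumi]
    by_cases h : f i x ≠ y <;> simp [h] <;> norm_num
  -- measurability in w for fixed (x,y)
  have hwmeas : ∀ (x : X) (y : Y),
      Measurable (fun w : Fin n → ℝ => mvLoss f (1 / 2) w x y) := by
    intro x y
    unfold mvLoss
    refine Measurable.ite ?_ measurable_const measurable_const
    exact measurableSet_le measurable_const
      (Finset.measurable_sum _ fun i _ => (measurable_pi_apply i).mul_const _)
  -- inner integral computation
  have hinner : ∀ (z : X × Y),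
      (∫ w, mvLoss f (1 / 2) w z.1 z.2 ∂(catMeasure p))
        = ∑ i, p i * (if f i z.1 ≠ z.2 then (1:ℝ) else 0) := by
    intro z
    rw [catMeasure, integral_finset_sum_measure]
    · refine Finset.sum_congr rfl fun i _ => ?_
      rw [integral_smul_measure, integral_dirac, ENNReal.toReal_ofReal (hp i).1,
        smul_eq_mul, hbasis]
    · intro i _
      have hint : Integrable (fun w => mvLoss f (1 / 2) w z.1 z.2)
          (Measure.dirac (Pi.single i (1:ℝ))) := by
        refine Integrable.mono' (integrable_const (1:ℝ))
          (hwmeas z.1 z.2).aestronglyMeasurable ?_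
        filter_upwards with w
        unfold mvLoss
        split <;> simp
      exact hint.smul_measure ENNReal.ofReal_ne_top
  have hs_meas : MeasurableSet s := (hmeas p) (measurableSet_singleton 1)
  haveI : IsProbabilityMeasure (D[|s]) := cond_isProbabilityMeasure hpos1
  -- a.e. membership in s
  have hae : ∀ᵐ z ∂(D[|s]), z ∈ s := by
    rw [ae_iff]
    have : (D[|s]) sᶜ = 0 := by
      rw [cond_apply hs_meas]
      simp
    exact this
  -- pointwise bound on s
  have hpoint : ∀ z ∈ s, max (∑ i ∈ T, p i) (∑ i ∈ Tᶜ, p i)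
      ≤ ∑ i, p i * (if f i z.1 ≠ z.2 then (1:ℝ) else 0) := by
    intro z hz
    have h1 : (1:ℝ)/2 ≤ ∑ i, p i * (if f i z.1 ≠ z.2 then (1:ℝ) else 0) := by
      by_contra h
      have hz' : mvLoss f (1 / 2) p z.1 z.2 = 1 := hz
      unfold mvLoss at hz'
      rw [if_neg (by exact_mod_cast h)] at hz'
      norm_num at hz'
    set A : Finset (Fin n) := Finset.univ.filter (fun i => f i z.1 ≠ z.2) with hA
    have hS : (∑ i, p i * (if f i z.1 ≠ z.2 then (1:ℝ) else 0)) = ∑ i ∈ A, p i := by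
      rw [hA, Finset.sum_filter]
      exact Finset.sum_congr rfl fun i _ => by
        by_cases h : f i z.1 ≠ z.2 <;> simp [h]
    rw [hS] at h1 ⊢
    have hAc : (∑ i ∈ Aᶜ, p i) = 1 - ∑ i ∈ A, p i := by
      have h2 := Finset.sum_add_sum_compl A p
      rw [hsum] at h2; linarith
    have hTsum : (∑ i ∈ T, p i) + ∑ i ∈ Tᶜ, p i = 1 := by
      rw [Finset.sum_add_sum_compl, hsum]
    have habs : |(∑ i ∈ T, p i) - ∑ i ∈ Tᶜ, p i| ≤ 2 * (∑ i ∈ A, p i) - 1 := by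
      calc |(∑ i ∈ T, p i) - ∑ i ∈ Tᶜ, p i|
          ≤ |(∑ i ∈ A, p i) - ∑ i ∈ Aᶜ, p i| := hT A
        _ = 2 * (∑ i ∈ A, p i) - 1 := by
            rw [hAc, abs_of_nonneg (by linarith)]; ring
    have h3 := abs_le.mp habs
    exact max_le (by linarith [h3.2]) (by linarith [h3.1, h3.2])
  -- measurability and integrability of S
  have hSmeas : Measurable
      (fun z : X × Y => ∑ i, p i * (if f i z.1 ≠ z.2 then (1:ℝ) else 0)) := by
    apply Finset.measurable_sum
    intro i _
    have h := (hmeas (Pi.single i (1:ℝ))).const_mul (p i)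
    have he : (fun z : X × Y => p i * mvLoss f (1 / 2) (Pi.single i (1:ℝ)) z.1 z.2)
        = fun z : X × Y => p i * (if f i z.1 ≠ z.2 then (1:ℝ) else 0) := by
      funext z; rw [hbasis]
    rwa [he] at h
  have hSint : Integrable
      (fun z : X × Y => ∑ i, p i * (if f i z.1 ≠ z.2 then (1:ℝ) else 0)) (D[|s]) := by
    refine Integrable.mono' (integrable_const (1:ℝ))
      hSmeas.aestronglyMeasurable ?_
    filter_upwards with z
    have h0 : 0 ≤ ∑ i, p i * (if f i z.1 ≠ z.2 then (1:ℝ) else 0) :=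
      Finset.sum_nonneg fun i _ => mul_nonneg (hp i).1 (by positivity)
    rw [Real.norm_eq_abs, abs_of_nonneg h0]
    calc (∑ i, p i * (if f i z.1 ≠ z.2 then (1:ℝ) else 0))
        ≤ ∑ i, p i := Finset.sum_le_sum fun i _ => by
          by_cases h : f i z.1 ≠ z.2 <;> simp [h, (hp i).1]
      _ = 1 := hsum
  calc max (∑ i ∈ T, p i) (∑ i ∈ Tᶜ, p i)
      = ∫ _, max (∑ i ∈ T, p i) (∑ i ∈ Tᶜ, p i) ∂(D[|s]) := by
        rw [integral_const]; simp
    _ ≤ ∫ z, (∑ i, p i * (if f i z.1 ≠ z.2 then (1:ℝ) else 0)) ∂(D[|s]) := by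
        refine integral_mono_ae (integrable_const _) hSint ?_
        filter_upwards [hae] with z hz using hpoint z hz
    _ = ∫ z, (∫ w, mvLoss f (1 / 2) w z.1 z.2 ∂(catMeasure p)) ∂(D[|s]) := by
        simp only [hinner]
end

section
/- Let Y = {−1, +1}, let f_1,...,f_n: X→{−1,+1} be base classifiers, let p ∈ R^n, and let N(p, I) be the n-dimensional Gaussian distribution with mean p and identity covariance. For every (x,y) ∈ X×{−1,+1}: E_{w~N(p,I)} ℓ(h_w(x), y) = Φ( y · (p·f(x)) / ||f(x)|| ), where f(x) = (f_1(x),...,f_n(x)), Φ(k) = (1/2)(1 − erf(k/√2)), and erf(k) = (2/√π)∫₀^k e^{−t²} dt. -/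
/-!
STATEMENT 14 (Majority vote -- binary Gaussian stochastic loss).
For base classifiers `f_i : X → {−1,+1}`, `p ∈ ℝ^n` and `N(p,I)` the Gaussian
with mean `p` and identity covariance (the product of `n` standard Gaussians
with means `p_i`), for every `(x,y) ∈ X × {−1,+1}`:
`E_{w∼N(p,I)} ℓ(h_w(x),y) = Φ(y·(p·f(x))/‖f(x)‖)`,
where `Φ(k) = ½(1 − erf(k/√2))` and `erf(k) = (2/√π)∫₀ᵏ e^{−t²} dt`.
-/

open MeasureTheory ProbabilityTheory
open scoped ENNReal

/-- Binary majority-vote loss `ℓ(h_w(x),y) = 1{y ≠ sign(w·f(x))}`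
(equivalently `½(1 − y·sign(w·f(x)))`), with the error convention on ties. -/
noncomputable def signLoss {X : Type*} {n : ℕ} (f : Fin n → X → ℝ)
    (w : Fin n → ℝ) (x : X) (y : ℝ) : ℝ :=
  if y * ∑ i, w i * f i x ≤ 0 then 1 else 0

/-- The Gaussian `N(p, I)` on `ℝ^n`. -/
noncomputable def gaussPi {n : ℕ} (p : Fin n → ℝ) : Measure (Fin n → ℝ) :=
  Measure.pi fun i => ProbabilityTheory.gaussianReal (p i) 1

/-- `erf(k) = (2/√π) ∫₀ᵏ e^{−t²} dt`. -/
noncomputable def erf (k : ℝ) : ℝ :=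
  2 / Real.sqrt Real.pi * ∫ t in (0 : ℝ)..k, Real.exp (-t ^ 2)

/-- `Φ(k) = ½(1 − erf(k/√2))`. -/
noncomputable def Phi (k : ℝ) : ℝ :=
  (1 - erf (k / Real.sqrt 2)) / 2

open Real Set
open scoped NNReal

lemma pdf_bound (m : ℝ) (v : ℝ≥0) (x : ℝ) :
    gaussianPDFReal m v x ≤ (Real.sqrt (2 * Real.pi * v))⁻¹ := by
  rw [gaussianPDFReal]
  have h1 : Real.exp (-(x - m) ^ 2 / (2 * v)) ≤ 1 := by
    rw [Real.exp_le_one_iff]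
    apply div_nonpos_of_nonpos_of_nonneg
    · simp [sq_nonneg]
    · positivity
  calc (Real.sqrt (2 * Real.pi * v))⁻¹ * Real.exp (-(x - m) ^ 2 / (2 * v))
      ≤ (Real.sqrt (2 * Real.pi * v))⁻¹ * 1 := by gcongr
    _ = _ := by ring


lemma pdf_conv (m₁ m₂ : ℝ) (v : ℝ≥0) (hv : v ≠ 0) (t : ℝ) :
    ∫ a, gaussianPDFReal m₁ 1 a * gaussianPDFReal m₂ v (t - a)
      = gaussianPDFReal (m₁ + m₂) (1 + v) t := by
  have hV : (0:ℝ) < (v:ℝ) := by positivity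
  set V : ℝ := (v:ℝ) with hVdef
  have h1V : (0:ℝ) < 1 + V := by linarith
  set A : ℝ := (1 + V) / (2 * V) with hA
  have hApos : 0 < A := by positivity
  set s : ℝ := t - m₁ - m₂ with hs
  set a₀ : ℝ := m₁ + s / (1 + V) with ha₀
  set C : ℝ := (Real.sqrt (2 * π))⁻¹ * (Real.sqrt (2 * π * V))⁻¹
      * Real.exp (-s ^ 2 / (2 * (1 + V))) with hC
  have key : ∀ a : ℝ, gaussianPDFReal m₁ 1 a * gaussianPDFReal m₂ v (t - a)
      = C * Real.exp (-A * (a - a₀) ^ 2) := by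
    intro a
    rw [gaussianPDFReal, gaussianPDFReal, hC, ← hVdef]
    simp only [NNReal.coe_one, mul_one]
    rw [mul_mul_mul_comm, ← Real.exp_add,
      mul_assoc ((Real.sqrt (2*π))⁻¹ * (Real.sqrt (2*π*V))⁻¹), ← Real.exp_add]
    congr 1
    rw [Real.exp_eq_exp, hA, hs, ha₀]
    field_simp
    ring
  have hconst : (Real.sqrt (2 * π))⁻¹ * (Real.sqrt (2 * π * V))⁻¹ * Real.sqrt (π / A)
      = (Real.sqrt (2 * π * (1 + V)))⁻¹ := by
    rw [← Real.sqrt_inv, ← Real.sqrt_inv, ← Real.sqrt_inv,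
      ← Real.sqrt_mul (by positivity), ← Real.sqrt_mul (by positivity)]
    congr 1
    rw [hA]
    field_simp
  calc ∫ a, gaussianPDFReal m₁ 1 a * gaussianPDFReal m₂ v (t - a)
      = ∫ a, C * Real.exp (-A * (a - a₀) ^ 2) := by simp only [key]
    _ = C * ∫ a, Real.exp (-A * (a - a₀) ^ 2) := by rw [MeasureTheory.integral_const_mul]
    _ = C * ∫ a, Real.exp (-A * a ^ 2) := by
        rw [integral_sub_right_eq_self (fun a => Real.exp (-A * a ^ 2)) a₀]
    _ = C * Real.sqrt (π / A) := by rw [integral_gaussian]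
    _ = gaussianPDFReal (m₁ + m₂) (1 + v) t := by
        rw [gaussianPDFReal, hC]
        push_cast
        rw [← hVdef, mul_right_comm, hconst]
        congr 2
        rw [hs]
        ring


lemma pdf_shift (m a : ℝ) (v : ℝ≥0) (x : ℝ) :
    gaussianPDFReal (m + a) v x = gaussianPDFReal m v (x - a) := by
  rw [gaussianPDFReal, gaussianPDFReal]
  ring_nf

lemma pdf_conv_lintegral (m₁ m₂ : ℝ) (v : ℝ≥0) (hv : v ≠ 0) (t : ℝ) :
    ∫⁻ a, gaussianPDF m₁ 1 a * gaussianPDF m₂ v (t - a)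
      = gaussianPDF (m₁ + m₂) (1 + v) t := by
  have hint : Integrable (fun a => gaussianPDFReal m₁ 1 a * gaussianPDFReal m₂ v (t - a)) := by
    apply Integrable.mono' ((integrable_gaussianPDFReal m₁ 1).const_mul
      ((Real.sqrt (2 * Real.pi * v))⁻¹))
    · exact (((measurable_gaussianPDFReal m₁ 1).mul
        ((measurable_gaussianPDFReal m₂ v).comp (measurable_const.sub measurable_id))
        ).aestronglyMeasurable)
    · refine Filter.Eventually.of_forall fun a => ?_
      rw [Real.norm_eq_abs, abs_of_nonneg (mul_nonneg (gaussianPDFReal_nonneg _ _ _)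
        (gaussianPDFReal_nonneg _ _ _))]
      rw [mul_comm]
      exact mul_le_mul_of_nonneg_right (pdf_bound m₂ v (t - a)) (gaussianPDFReal_nonneg _ _ _)
  calc ∫⁻ a, gaussianPDF m₁ 1 a * gaussianPDF m₂ v (t - a)
      = ∫⁻ a, ENNReal.ofReal (gaussianPDFReal m₁ 1 a * gaussianPDFReal m₂ v (t - a)) := by
        simp only [gaussianPDF, ENNReal.ofReal_mul (gaussianPDFReal_nonneg m₁ 1 _)]
    _ = ENNReal.ofReal (∫ a, gaussianPDFReal m₁ 1 a * gaussianPDFReal m₂ v (t - a)) :=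
        (ofReal_integral_eq_lintegral_ofReal hint (Filter.Eventually.of_forall fun a =>
          mul_nonneg (gaussianPDFReal_nonneg _ _ _) (gaussianPDFReal_nonneg _ _ _))).symm
    _ = gaussianPDF (m₁ + m₂) (1 + v) t := by rw [pdf_conv m₁ m₂ v hv t]; rfl

lemma gauss_conv (m₁ m₂ : ℝ) (v : ℝ≥0) :
    Measure.map (fun q : ℝ × ℝ => q.1 + q.2) ((gaussianReal m₁ 1).prod (gaussianReal m₂ v))
      = gaussianReal (m₁ + m₂) (1 + v) := by
  by_cases hv : v = 0
  · subst hv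
    rw [gaussianReal_zero_var, Measure.prod_dirac,
      Measure.map_map (by fun_prop) (by fun_prop)]
    have : ((fun q : ℝ × ℝ => q.1 + q.2) ∘ fun x => (x, m₂)) = (· + m₂) := rfl
    rw [this, gaussianReal_map_add_const]
    norm_num
  · have h1v : (1 : ℝ≥0) + v ≠ 0 := by simp
    ext s hs
    rw [Measure.map_apply (by fun_prop) hs,
      Measure.prod_apply (hs.preimage (by fun_prop))]
    have hmap : ∀ a : ℝ, (gaussianReal m₂ v) (Prod.mk a ⁻¹' ((fun q : ℝ × ℝ => q.1 + q.2) ⁻¹' s))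
        = ∫⁻ x, s.indicator (fun x => gaussianPDF m₂ v (x - a)) x ∂(volume : Measure ℝ) := by
      intro a
      have h1 : (Prod.mk a ⁻¹' ((fun q : ℝ × ℝ => q.1 + q.2) ⁻¹' s))
          = (fun b => a + b) ⁻¹' s := rfl
      rw [h1, ← Measure.map_apply (by fun_prop) hs, gaussianReal_map_const_add,
        gaussianReal_apply _ hv, ← lintegral_indicator hs]
      congr 1
      ext x
      by_cases hx : x ∈ s
      · simp only [Set.indicator_of_mem hx]
        rw [gaussianPDF, gaussianPDF, pdf_shift]
      · simp [Set.indicator_of_notMem hx]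
    have hGmeas : Measurable (Function.uncurry fun (a x : ℝ) =>
        s.indicator (fun x => gaussianPDF m₂ v (x - a)) x) := by
      have h2 : (fun q : ℝ × ℝ => s.indicator (fun x => gaussianPDF m₂ v (x - q.1)) q.2)
          = (Set.univ ×ˢ s).indicator (fun q : ℝ × ℝ => gaussianPDF m₂ v (q.2 - q.1)) := by
        ext q
        by_cases hq : q.2 ∈ s
        · simp [Set.indicator_of_mem, hq]
        · simp [Set.indicator_of_notMem, hq]
      show Measurable (fun q : ℝ × ℝ => s.indicator (fun x => gaussianPDF m₂ v (x - q.1)) q.2)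
      rw [h2]
      exact Measurable.indicator
        ((measurable_gaussianPDF m₂ v).comp (measurable_snd.sub measurable_fst))
        (MeasurableSet.univ.prod hs)
    simp only [hmap]
    rw [gaussianReal_of_var_ne_zero m₁ one_ne_zero,
      lintegral_withDensity_eq_lintegral_mul _ (measurable_gaussianPDF m₁ 1)
        (Measurable.lintegral_prod_right hGmeas)]
    simp only [Pi.mul_apply]
    have hpull : ∀ a : ℝ, gaussianPDF m₁ 1 a *
        ∫⁻ x, s.indicator (fun x => gaussianPDF m₂ v (x - a)) x ∂(volume : Measure ℝ)
        = ∫⁻ x, gaussianPDF m₁ 1 a * s.indicator (fun x => gaussianPDF m₂ v (x - a)) x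
          ∂(volume : Measure ℝ) := by
      intro a
      rw [lintegral_const_mul _ (hGmeas.of_uncurry_left)]
    simp only [hpull]
    rw [lintegral_lintegral_swap ((measurable_gaussianPDF m₁ 1).comp measurable_fst |>.mul
      hGmeas).aemeasurable]
    have hinner : ∀ x : ℝ, (∫⁻ a, gaussianPDF m₁ 1 a *
        s.indicator (fun x => gaussianPDF m₂ v (x - a)) x ∂(volume : Measure ℝ))
        = s.indicator (fun x => gaussianPDF (m₁ + m₂) (1 + v) x) x := by
      intro x
      by_cases hx : x ∈ s
      · simp only [Set.indicator_of_mem hx]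
        exact pdf_conv_lintegral m₁ m₂ v hv x
      · simp [Set.indicator_of_notMem hx]
    simp only [hinner]
    rw [lintegral_indicator hs, ← gaussianReal_apply _ h1v]

lemma map_sum_gauss : ∀ {n : ℕ} (p c : Fin n → ℝ), (∀ i, c i = 1 ∨ c i = -1) →
    Measure.map (fun w : Fin n → ℝ => ∑ i, w i * c i) (gaussPi p)
      = gaussianReal (∑ i, p i * c i) (n : ℝ≥0) := by
  intro n
  induction n with
  | zero =>
    intro p c hc
    have : IsProbabilityMeasure (gaussPi p) := by unfold gaussPi; infer_instance
    simp only [Finset.univ_eq_empty, Finset.sum_empty, Nat.cast_zero]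
    rw [show (fun w : Fin 0 → ℝ => (0:ℝ)) = fun _ => 0 from rfl, Measure.map_const,
      measure_univ, one_smul, gaussianReal_zero_var]
  | succ n ih =>
    intro p c hc
    have hmp := measurePreserving_piFinSuccAbove
      (fun i : Fin (n+1) => gaussianReal (p i) 1) 0
    set e := MeasurableEquiv.piFinSuccAbove (fun _ : Fin (n+1) => ℝ) 0 with he
    have hSe : (fun w : Fin (n+1) → ℝ => ∑ i, w i * c i)
        = (fun q : ℝ × (Fin n → ℝ) => q.1 * c 0 + ∑ j, q.2 j * c j.succ) ∘ e := by
      funext w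
      simp only [Function.comp_apply, he, MeasurableEquiv.piFinSuccAbove]
      rw [Fin.sum_univ_succ]
      simp [he, MeasurableEquiv.piFinSuccAbove, Fin.insertNthEquiv, Fin.removeNth]
      rfl
    rw [hSe, gaussPi, ← Measure.map_map (by fun_prop) e.measurable, hmp.map_eq]
    have hsa : ∀ j : Fin n, (0 : Fin (n+1)).succAbove j = j.succ := fun j => rfl
    have hprod : (fun q : ℝ × (Fin n → ℝ) => q.1 * c 0 + ∑ j, q.2 j * c j.succ)
        = (fun q : ℝ × ℝ => q.1 + q.2) ∘
          (Prod.map (fun a : ℝ => a * c 0) (fun r : Fin n → ℝ => ∑ j, r j * c j.succ)) := rfl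
    rw [hprod, ← Measure.map_map (by fun_prop) (by fun_prop)]
    have hc0 : ((⟨(c 0)^2, sq_nonneg _⟩ : ℝ≥0) * 1) = 1 := by
      rcases hc 0 with h | h <;> · rw [mul_one]; ext; simp [h]
    have hpm : Measure.map (Prod.map (fun a : ℝ => a * c 0)
          (fun r : Fin n → ℝ => ∑ j, r j * c j.succ))
          ((gaussianReal (p 0) 1).prod (Measure.pi fun j => gaussianReal (p (Fin.succAbove 0 j)) 1))
        = (gaussianReal (c 0 * p 0) 1).prod
          (gaussianReal (∑ j : Fin n, p j.succ * c j.succ) (n : ℝ≥0)) := by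
      rw [← Measure.map_prod_map _ _ (by fun_prop) (by fun_prop)]
      congr 1
      · rw [gaussianReal_map_mul_const]; exact congrArg _ hc0
      · have : (Measure.pi fun j : Fin n => gaussianReal (p (Fin.succAbove 0 j)) 1)
            = gaussPi (fun j => p j.succ) := by
          simp only [hsa]; rfl
        rw [this, ih (fun j => p j.succ) (fun j => c j.succ) (fun j => hc j.succ)]
    rw [hpm, gauss_conv]
    congr 1
    · rw [Fin.sum_univ_succ]; ring_nf
    · push_cast
      ring

lemma gauss_Iic (m : ℝ) (v : ℝ≥0) (hv : v ≠ 0) :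
    ((gaussianReal m v) (Set.Iic 0)).toReal = Phi (m / Real.sqrt v) := by
  have hV : (0:ℝ) < (v:ℝ) := by positivity
  set V : ℝ := (v:ℝ) with hVdef
  have hint : Integrable (gaussianPDFReal m v) := integrable_gaussianPDFReal m v
  rw [gaussianReal_apply_eq_integral m hv, ENNReal.toReal_ofReal
    (setIntegral_nonneg measurableSet_Iic fun z _ => gaussianPDFReal_nonneg _ _ _)]
  -- the centered pdf
  set h : ℝ → ℝ := gaussianPDFReal 0 v with hh
  have hinth : Integrable h := integrable_gaussianPDFReal 0 v
  -- half mass up to the mean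
  have hhalf : ∫ z in Set.Iic m, gaussianPDFReal m v z = 1/2 := by
    have hpre : (fun x : ℝ => x + m) ⁻¹' (Set.Iic m) = Set.Iic 0 := by
      ext x; simp
    have hshift := (measurePreserving_add_right (volume : Measure ℝ) m).setIntegral_preimage_emb
      (measurableEmbedding_addRight m) (gaussianPDFReal m v) (Set.Iic m)
    rw [hpre] at hshift
    have hps : ∀ x : ℝ, gaussianPDFReal m v (x + m) = h x := by
      intro x
      have := pdf_shift 0 m v (x + m)
      rw [zero_add] at this
      rw [this, add_sub_cancel_right]
    simp only [hps] at hshift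
    have heven : ∀ x : ℝ, h (-x) = h x := by
      intro x
      rw [hh, gaussianPDFReal, gaussianPDFReal]
      ring_nf
    have h2 : ∫ x in Set.Iic (0:ℝ), h x = ∫ x in Set.Ioi (0:ℝ), h x := by
      have h2' := integral_comp_neg_Iic (0:ℝ) h
      simp only [heven, neg_zero] at h2'
      exact h2'
    have h3 := intervalIntegral.integral_Iic_add_Ioi (b := (0:ℝ)) hinth.integrableOn
      hinth.integrableOn
    rw [integral_gaussianPDFReal_eq_one 0 hv] at h3
    rw [← hshift, h2] at *
    linarith
  have hsub := intervalIntegral.integral_Iic_sub_Iic (a := (0:ℝ)) (b := m)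
    hint.integrableOn hint.integrableOn
  rw [hhalf] at hsub
  -- now compute the interval integral
  set σ : ℝ := Real.sqrt (2 * V) with hσ
  have hσpos : 0 < σ := by rw [hσ]; positivity
  set C : ℝ := (Real.sqrt (2 * Real.pi * V))⁻¹ with hCd
  have hJ : ∫ t in (0:ℝ)..m, gaussianPDFReal m v t
      = σ * C * ∫ w in (0:ℝ)..(m/σ), Real.exp (-w^2) := by
    have e1 : ∀ t : ℝ, gaussianPDFReal m v t = C * Real.exp (-((t - m)/σ)^2) := by
      intro t
      rw [gaussianPDFReal, hCd, ← hVdef]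
      congr 1
      rw [div_pow, Real.sq_sqrt (by positivity), neg_div]
    simp only [e1]
    have e2 : ∀ u : ℝ, C * Real.exp (-(u/σ)^2) = (fun w => C * Real.exp (-w^2)) (u/σ) := by
      intro u; rfl
    rw [show (fun t : ℝ => C * Real.exp (-((t - m)/σ)^2))
        = fun t : ℝ => (fun u => C * Real.exp (-(u/σ)^2)) (t - m) from rfl]
    rw [intervalIntegral.integral_comp_sub_right (fun u => C * Real.exp (-(u/σ)^2)) m]
    rw [show (0:ℝ) - m = -m by ring, sub_self]
    rw [show (fun u : ℝ => C * Real.exp (-(u/σ)^2))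
        = fun u : ℝ => (fun w => C * Real.exp (-w^2)) (u/σ) from rfl]
    rw [intervalIntegral.integral_comp_div (fun w => C * Real.exp (-w^2)) hσpos.ne']
    beta_reduce
    rw [zero_div, neg_div]
    have e3 : ∫ w in (-(m/σ))..(0:ℝ), C * Real.exp (-w^2)
        = ∫ w in (0:ℝ)..(m/σ), C * Real.exp (-w^2) := by
      have e4 := intervalIntegral.integral_comp_neg (a := (0:ℝ)) (b := m/σ)
        (fun w => C * Real.exp (-w^2))
      beta_reduce at e4
      simp only [neg_neg, neg_sq, neg_zero] at e4
      rw [← e4]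
    rw [e3, intervalIntegral.integral_const_mul, smul_eq_mul]
    ring
  have hσC : σ * C = (Real.sqrt Real.pi)⁻¹ := by
    rw [hσ, hCd, ← Real.sqrt_inv, ← Real.sqrt_inv, ← Real.sqrt_mul (by positivity)]
    congr 1
    field_simp
  have hk : m / σ = m / Real.sqrt V / Real.sqrt 2 := by
    rw [hσ, show (2:ℝ) * V = 2 * V from rfl, Real.sqrt_mul (by norm_num) V]
    rw [div_div]
    ring_nf
  have hπ : (0:ℝ) < Real.sqrt Real.pi := Real.sqrt_pos.mpr Real.pi_pos
  rw [hJ, hσC, hk] at hsub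
  rw [Phi, erf]
  have := hsub
  field_simp at this ⊢
  linarith

lemma erf_neg (k : ℝ) : erf (-k) = - erf k := by
  rw [erf, erf]
  have e4 := intervalIntegral.integral_comp_neg (a := (0:ℝ)) (b := k)
    (fun t => Real.exp (-t^2))
  simp only [neg_sq, neg_zero] at e4
  rw [show (∫ t in (0:ℝ)..(-k), Real.exp (-t^2)) = -∫ t in (-k)..(0:ℝ), Real.exp (-t^2)
    from intervalIntegral.integral_symm _ _, ← e4]
  ring

lemma Phi_neg (k : ℝ) : Phi (-k) = 1 - Phi k := by
  rw [Phi, Phi, neg_div, erf_neg]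
  ring

lemma gauss_Ici (m : ℝ) (v : ℝ≥0) (hv : v ≠ 0) :
    ((gaussianReal m v) (Set.Ici 0)).toReal = Phi (-(m / Real.sqrt v)) := by
  have h0 : (gaussianReal m v) {(0:ℝ)} = 0 :=
    gaussianReal_absolutelyContinuous m hv (by simp)
  have hIic : (gaussianReal m v) (Set.Iic 0) = (gaussianReal m v) (Set.Iio 0) := by
    apply le_antisymm
    · rw [← Set.Iio_union_right]
      calc (gaussianReal m v) (Set.Iio 0 ∪ {0})
          ≤ (gaussianReal m v) (Set.Iio 0) + (gaussianReal m v) {0} := measure_union_le _ _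
        _ = (gaussianReal m v) (Set.Iio 0) := by rw [h0, add_zero]
    · exact measure_mono Set.Iio_subset_Iic_self
  have hcompl : (gaussianReal m v) (Set.Ici 0)
      = 1 - (gaussianReal m v) (Set.Iic 0) := by
    rw [hIic, ← Set.compl_Iio, measure_compl measurableSet_Iio (measure_ne_top _ _),
      measure_univ]
  rw [hcompl, Phi_neg, ← gauss_Iic m v hv, ENNReal.toReal_sub_of_le prob_le_one ENNReal.one_ne_top]
  simp

theorem binary_gaussian_stochastic_loss
    {X : Type*} [MeasurableSpace X]
    {n : ℕ} (hn : 0 < n) (f : Fin n → X → ℝ)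
    (hf : ∀ i x, f i x = 1 ∨ f i x = -1)
    (p : Fin n → ℝ) (x : X) (y : ℝ) (hy : y = 1 ∨ y = -1) :
    ∫ w, signLoss f w x y ∂(gaussPi p)
      = Phi (y * (∑ i, p i * f i x) / Real.sqrt (∑ i, f i x ^ 2)) := by
  classical
  have hc : ∀ i, f i x = 1 ∨ f i x = -1 := fun i => hf i x
  have hS : Measurable fun w : Fin n → ℝ => ∑ i, w i * f i x :=
    Finset.measurable_sum _ fun i _ => (measurable_pi_apply i).mul_const _
  have hsum2 : (∑ i, f i x ^ 2) = (n:ℝ) := by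
    rw [Finset.sum_congr rfl (fun i _ => show f i x ^ 2 = 1 by
      rcases hc i with h | h <;> rw [h] <;> norm_num)]
    simp
  have hnn : (n : ℝ≥0) ≠ 0 := by exact_mod_cast hn.ne'
  have hmap := map_sum_gauss p (fun i => f i x) hc
  have hcoe : ((n : ℝ≥0) : ℝ) = (n : ℝ) := by simp
  rcases hy with hy | hy <;> subst hy
  · have hind : ∀ w : Fin n → ℝ, signLoss f w x 1
        = Set.indicator ((fun w : Fin n → ℝ => ∑ i, w i * f i x) ⁻¹' (Set.Iic 0))
          (fun _ => (1:ℝ)) w := by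
      intro w
      rw [signLoss, Set.indicator_apply]
      simp [Set.mem_Iic]
    calc ∫ w, signLoss f w x 1 ∂(gaussPi p)
        = ∫ w, Set.indicator ((fun w : Fin n → ℝ => ∑ i, w i * f i x) ⁻¹' (Set.Iic 0))
            (fun _ => (1:ℝ)) w ∂(gaussPi p) := by
          exact integral_congr_ae (Filter.Eventually.of_forall hind)
      _ = ((gaussPi p) ((fun w : Fin n → ℝ => ∑ i, w i * f i x) ⁻¹' (Set.Iic 0))).toReal := by
          rw [integral_indicator_const (1:ℝ) (hS measurableSet_Iic), smul_eq_mul, mul_one]; rfl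
      _ = ((gaussianReal (∑ i, p i * f i x) (n : ℝ≥0)) (Set.Iic 0)).toReal := by
          rw [← Measure.map_apply hS measurableSet_Iic, hmap]
      _ = Phi (1 * (∑ i, p i * f i x) / Real.sqrt (∑ i, f i x ^ 2)) := by
          rw [gauss_Iic _ _ hnn, hsum2, one_mul, hcoe]
  · have hind : ∀ w : Fin n → ℝ, signLoss f w x (-1)
        = Set.indicator ((fun w : Fin n → ℝ => ∑ i, w i * f i x) ⁻¹' (Set.Ici 0))
          (fun _ => (1:ℝ)) w := by
      intro w
      rw [signLoss, Set.indicator_apply]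
      have : (-1:ℝ) * ∑ i, w i * f i x ≤ 0 ↔ 0 ≤ ∑ i, w i * f i x := by
        constructor <;> intro h <;> nlinarith
      simp [Set.mem_Ici, this]
    calc ∫ w, signLoss f w x (-1) ∂(gaussPi p)
        = ∫ w, Set.indicator ((fun w : Fin n → ℝ => ∑ i, w i * f i x) ⁻¹' (Set.Ici 0))
            (fun _ => (1:ℝ)) w ∂(gaussPi p) := by
          exact integral_congr_ae (Filter.Eventually.of_forall hind)
      _ = ((gaussPi p) ((fun w : Fin n → ℝ => ∑ i, w i * f i x) ⁻¹' (Set.Ici 0))).toReal := by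
          rw [integral_indicator_const (1:ℝ) (hS measurableSet_Ici), smul_eq_mul, mul_one]; rfl
      _ = ((gaussianReal (∑ i, p i * f i x) (n : ℝ≥0)) (Set.Ici 0)).toReal := by
          rw [← Measure.map_apply hS measurableSet_Ici, hmap]
      _ = Phi (-1 * (∑ i, p i * f i x) / Real.sqrt (∑ i, f i x ^ 2)) := by
          rw [gauss_Ici _ _ hnn, hsum2, hcoe]
          congr 1
          ring
end

section
/- Let Y = {−1, +1}, let f_1,...,f_n: X→{−1,+1} be base classifiers, let p ∈ R^n, and let N(p, I) be the n-dimensional Gaussian distribution with mean p and identity covariance. For any data distribution D over X×{−1,+1}: c_D^{N(p,I)}(h_p) = 1 − E_{(x,y)~D}[ Φ( |p·f(x)| / ||f(x)|| ) | y·(p·f(x)) ≤ 0 ] and b_D^{N(p,I)}(h_p) = E_{(x,y)~D}[ Φ( |p·f(x)| / ||f(x)|| ) | y·(p·f(x)) > 0 ], where Φ(k) = (1/2)(1 − erf(k/√2)). -/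
/-!
STATEMENT 15 (Majority vote -- binary Gaussian S2D: the conditional stochastic risks).
For base classifiers `f_i : X → {−1,+1}`, `p ∈ ℝ^n` and `N(p,I)` the Gaussian
with mean `p` and identity covariance, for any data distribution `D` over
`X × {−1,+1}`:
`c_D^{N(p,I)}(h_p) = 1 − E[Φ(|p·f(x)|/‖f(x)‖) | y·(p·f(x)) ≤ 0]` and
`b_D^{N(p,I)}(h_p) = E[Φ(|p·f(x)|/‖f(x)‖) | y·(p·f(x)) > 0]`,
where `Φ(k) = ½(1 − erf(k/√2))`.
-/

open MeasureTheory ProbabilityTheory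
open scoped ENNReal

section AuxProofs
open Real Set
open scoped NNReal

-- half gaussian integrals
lemma integral_exp_neg_sq_Iic_zero : ∫ t in Iic (0:ℝ), Real.exp (-t ^ 2) = Real.sqrt π / 2 := by
  have h := integral_comp_neg_Ioi (0:ℝ) (fun t => Real.exp (-t ^ 2))
  have h2 : ∫ t in Ioi (0:ℝ), Real.exp (-t^2) = Real.sqrt π / 2 := by
    have := integral_gaussian_Ioi 1
    simpa using this
  rw [← h2, ← neg_zero, ← h]
  norm_num

lemma integrable_exp_neg_sq : Integrable (fun t : ℝ => Real.exp (-t ^ 2)) := by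
  have := integrable_exp_neg_mul_sq (b := (1:ℝ)) one_pos
  simpa using this

lemma integral_exp_neg_sq_Iic (a : ℝ) :
    ∫ t in Iic a, Real.exp (-t ^ 2) = Real.sqrt π / 2 + ∫ t in (0:ℝ)..a, Real.exp (-t ^ 2) := by
  have h := intervalIntegral.integral_Iic_sub_Iic (f := fun t : ℝ => Real.exp (-t ^ 2))
    (μ := volume) (a := (0:ℝ)) (b := a) integrable_exp_neg_sq.integrableOn
    integrable_exp_neg_sq.integrableOn
  rw [integral_exp_neg_sq_Iic_zero] at h
  linarith

lemma integral_exp_neg_sq_Ioi (a : ℝ) :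
    ∫ t in Ioi a, Real.exp (-t ^ 2)
      = Real.sqrt π / 2 - ∫ t in (0:ℝ)..a, Real.exp (-t ^ 2) := by
  have htot : ∫ t : ℝ, Real.exp (-t ^ 2) = Real.sqrt π := by
    have := integral_gaussian 1
    simpa using this
  have hsplit := intervalIntegral.integral_Iic_add_Ioi (b := a) (μ := volume)
    (f := fun t : ℝ => Real.exp (-t ^ 2))
    integrable_exp_neg_sq.integrableOn integrable_exp_neg_sq.integrableOn
  rw [htot, integral_exp_neg_sq_Iic] at hsplit
  linarith

lemma integral_shift_Ioi (h : ℝ → ℝ) (hm : Measurable h) (M : ℝ) :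
    ∫ x in Ioi (0:ℝ), h (x + M) = ∫ y in Ioi M, h y := by
  have A : MeasurableEmbedding (fun x : ℝ => x + M) :=
    (Homeomorph.addRight M).isClosedEmbedding.measurableEmbedding
  have := A.setIntegral_map (μ := volume) h (Ioi M)
  rw [map_add_right_eq_self volume M] at this
  rw [this]
  congr 1
  ext x
  simp [lt_sub_iff_add_lt, sub_pos]

lemma integral_gaussianPDFReal_Iic_zero (M : ℝ) {v : ℝ≥0} (hv : v ≠ 0) :
    ∫ x in Iic (0:ℝ), gaussianPDFReal M v x = Phi (M / Real.sqrt v) := by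
  have hv0 : (0:ℝ) < (v:ℝ) := by
    exact_mod_cast (zero_lt_iff.mpr hv)
  set c : ℝ := Real.sqrt (2 * v) with hc_def
  have hc : 0 < c := Real.sqrt_pos.2 (by positivity)
  have hcsq : c ^ 2 = 2 * v := Real.sq_sqrt (by positivity)
  have hJ : ∫ x in Iic (0:ℝ), Real.exp (-(x - M) ^ 2 / (2 * v))
      = c * (Real.sqrt π / 2 - ∫ t in (0:ℝ)..(M / c), Real.exp (-t ^ 2)) := by
    have stepA : ∫ x in Iic (0:ℝ), Real.exp (-(x - M) ^ 2 / (2 * v))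
        = ∫ u in Ioi (0:ℝ), Real.exp (-(u + M) ^ 2 / (2 * v)) := by
      have := integral_comp_neg_Iic (0:ℝ) (fun u => Real.exp (-(u + M) ^ 2 / (2 * v)))
      simp only [neg_zero] at this
      rw [← this]
      refine setIntegral_congr_fun measurableSet_Iic fun x _ => ?_
      congr 1
      ring
    have stepB : ∫ u in Ioi (0:ℝ), Real.exp (-(u + M) ^ 2 / (2 * v))
        = ∫ y in Ioi M, Real.exp (-y ^ 2 / (2 * v)) :=
      integral_shift_Ioi (fun y => Real.exp (-y ^ 2 / (2 * v)))
        (by fun_prop) M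
    have hexp : ∀ y : ℝ, Real.exp (-y ^ 2 / (2 * v)) = Real.exp (-(y * c⁻¹) ^ 2) := by
      intro y
      congr 1
      rw [mul_pow, inv_pow, ← hcsq]
      field_simp
    have stepC : ∫ y in Ioi M, Real.exp (-y ^ 2 / (2 * v))
        = c * ∫ t in Ioi (M * c⁻¹), Real.exp (-t ^ 2) := by
      simp_rw [hexp]
      rw [integral_comp_mul_right_Ioi (fun t => Real.exp (-t ^ 2)) M (inv_pos.2 hc)]
      simp [hc.ne']
    rw [stepA, stepB, stepC, integral_exp_neg_sq_Ioi]
    rw [div_eq_mul_inv M c]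
  have hpdf : ∀ x : ℝ, gaussianPDFReal M v x
      = (Real.sqrt (2 * π * v))⁻¹ * Real.exp (-(x - M) ^ 2 / (2 * v)) := fun x => rfl
  simp_rw [hpdf]
  rw [integral_const_mul, hJ]
  have hsqrt2pi : Real.sqrt (2 * π * v) = c * Real.sqrt π := by
    rw [hc_def, ← Real.sqrt_mul (by positivity)]
    congr 1
    ring
  have hMc : M / c = M / Real.sqrt v / Real.sqrt 2 := by
    rw [hc_def, show (2 * v : ℝ) = 2 * v from rfl, Real.sqrt_mul (by norm_num)]
    rw [div_div]
    ring_nf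
  have hπ : (0:ℝ) < Real.sqrt π := Real.sqrt_pos.2 Real.pi_pos
  rw [hsqrt2pi, hMc]
  unfold Phi erf
  field_simp

lemma Phi_eq_integral (k : ℝ) : Phi k = ∫ x in Iic (0:ℝ), gaussianPDFReal k 1 x := by
  have := integral_gaussianPDFReal_Iic_zero k (v := 1) one_ne_zero
  simp at this
  rw [this]

lemma Phi_nonneg (k : ℝ) : 0 ≤ Phi k := by
  rw [Phi_eq_integral]
  exact integral_nonneg fun x => gaussianPDFReal_nonneg _ _ _

lemma Phi_le_one (k : ℝ) : Phi k ≤ 1 := by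
  rw [Phi_eq_integral]
  calc ∫ x in Iic (0:ℝ), gaussianPDFReal k 1 x
      ≤ ∫ x, gaussianPDFReal k 1 x :=
        setIntegral_le_integral (integrable_gaussianPDFReal k 1)
          (ae_of_all _ fun x => gaussianPDFReal_nonneg _ _ _)
    _ = 1 := integral_gaussianPDFReal_eq_one k one_ne_zero

lemma continuous_Phi : Continuous Phi := by
  have h : Continuous erf := by
    unfold erf
    exact continuous_const.mul
      (intervalIntegral.continuous_primitive
        (fun a b => ((continuous_exp.comp (by fun_prop)).intervalIntegrable a b)) 0)
  unfold Phi
  fun_prop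

lemma pdf_conv_s15 (m1 m2 z : ℝ) {v1 v2 : ℝ≥0} (h1 : v1 ≠ 0) (h2 : v2 ≠ 0) :
    ∫ x : ℝ, gaussianPDFReal m1 v1 x * gaussianPDFReal m2 v2 (z - x)
      = gaussianPDFReal (m1 + m2) (v1 + v2) z := by
  have a1pos : (0:ℝ) < v1 := by exact_mod_cast (zero_lt_iff.mpr h1)
  have a2pos : (0:ℝ) < v2 := by exact_mod_cast (zero_lt_iff.mpr h2)
  set a1 : ℝ := (v1:ℝ)
  set a2 : ℝ := (v2:ℝ)
  set α : ℝ := (a1 + a2) / (2 * a1 * a2) with hα_def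
  have hα : 0 < α := by positivity
  set d : ℝ := (m1 * a2 + (z - m2) * a1) / (a1 + a2) with hd_def
  set r : ℝ := (z - (m1 + m2)) ^ 2 / (2 * (a1 + a2)) with hr_def
  have key : ∀ x : ℝ, gaussianPDFReal m1 v1 x * gaussianPDFReal m2 v2 (z - x)
      = ((Real.sqrt (2 * π * a1))⁻¹ * (Real.sqrt (2 * π * a2))⁻¹ * Real.exp (-r))
        * Real.exp (-(α * (x - d) ^ 2)) := by
    intro x
    show (Real.sqrt (2 * π * a1))⁻¹ * Real.exp (-(x - m1) ^ 2 / (2 * a1))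
        * ((Real.sqrt (2 * π * a2))⁻¹ * Real.exp (-(z - x - m2) ^ 2 / (2 * a2))) = _
    rw [mul_mul_mul_comm, ← Real.exp_add]
    conv_rhs => rw [mul_assoc, ← Real.exp_add]
    congr 1
    rw [hr_def, hα_def, hd_def]
    field_simp
    congr 1
    rw [div_eq_div_iff (by positivity) (by positivity)]
    ring
  simp_rw [key]
  rw [integral_const_mul]
  have : ∫ x : ℝ, Real.exp (-(α * (x - d) ^ 2)) = Real.sqrt (π / α) := by
    rw [integral_sub_right_eq_self (fun x => Real.exp (-(α * x ^ 2))) d]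
    simp_rw [neg_mul_eq_neg_mul]
    exact integral_gaussian α
  rw [this]
  show _ = (Real.sqrt (2 * π * (a1 + a2)))⁻¹ * Real.exp (-(z - (m1 + m2)) ^ 2 / (2 * (a1 + a2)))
  have hconst : (Real.sqrt (2 * π * a1))⁻¹ * (Real.sqrt (2 * π * a2))⁻¹ * Real.sqrt (π / α)
      = (Real.sqrt (2 * π * (a1 + a2)))⁻¹ := by
    rw [← Real.sqrt_inv, ← Real.sqrt_inv, ← Real.sqrt_mul (by positivity),
      ← Real.sqrt_mul (by positivity), ← Real.sqrt_inv]
    congr 1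
    rw [hα_def]
    field_simp
  have hrr : Real.exp (-r) = Real.exp (-(z - (m1 + m2)) ^ 2 / (2 * (a1 + a2))) := by
    rw [hr_def]; congr 1; field_simp
  calc (Real.sqrt (2 * π * a1))⁻¹ * (Real.sqrt (2 * π * a2))⁻¹ * Real.exp (-r) * Real.sqrt (π / α)
      = ((Real.sqrt (2 * π * a1))⁻¹ * (Real.sqrt (2 * π * a2))⁻¹ * Real.sqrt (π / α))
        * Real.exp (-r) := by ring
    _ = _ := by rw [hconst, hrr]

lemma gauss_conv_s15 (m1 m2 : ℝ) (v1 v2 : ℝ≥0) (h1 : v1 ≠ 0) :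
    ((gaussianReal m1 v1).prod (gaussianReal m2 v2)).map (fun q : ℝ × ℝ => q.1 + q.2)
      = gaussianReal (m1 + m2) (v1 + v2) := by
  by_cases h2 : v2 = 0
  · subst h2
    have hmk : Measurable fun x : ℝ => (x, m2) := measurable_id.prodMk measurable_const
    rw [gaussianReal_zero_var, Measure.prod_dirac, Measure.map_map measurable_add hmk]
    have : ((fun q : ℝ × ℝ => q.1 + q.2) ∘ fun x : ℝ => (x, m2)) = (· + m2) := rfl
    rw [this, gaussianReal_map_add_const]
    simp
  · have hsum : v1 + v2 ≠ 0 := by simp [h1]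
    ext s hs
    rw [Measure.map_apply measurable_add hs,
      Measure.prod_apply (hs.preimage measurable_add)]
    have hsec : ∀ x : ℝ, (Prod.mk x ⁻¹' ((fun q : ℝ × ℝ => q.1 + q.2) ⁻¹' s))
        = (fun y => x + y) ⁻¹' s := fun x => rfl
    have hmap : ∀ x : ℝ, gaussianReal m2 v2 ((fun y => x + y) ⁻¹' s)
        = ∫⁻ z in s, gaussianPDF (m2 + x) v2 z := by
      intro x
      rw [← Measure.map_apply (measurable_const_add x) hs, gaussianReal_map_const_add,
        gaussianReal_apply _ h2]
    simp_rw [hsec, hmap]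
    have hjoint : Measurable fun q : ℝ × ℝ => gaussianPDF (m2 + q.1) v2 q.2 := by
      unfold gaussianPDF gaussianPDFReal
      exact Measurable.ennreal_ofReal (by fun_prop)
    have hg : Measurable fun x : ℝ => ∫⁻ z in s, gaussianPDF (m2 + x) v2 z :=
      Measurable.lintegral_prod_right' (ν := volume.restrict s) hjoint
    rw [gaussianReal_of_var_ne_zero m1 h1,
      lintegral_withDensity_eq_lintegral_mul volume (measurable_gaussianPDF m1 v1) hg]
    have hswap : ∫⁻ x, gaussianPDF m1 v1 x * ∫⁻ z in s, gaussianPDF (m2 + x) v2 z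
        = ∫⁻ z in s, ∫⁻ x, gaussianPDF m1 v1 x * gaussianPDF (m2 + x) v2 z := by
      simp_rw [← lintegral_const_mul _ (measurable_gaussianPDF _ v2)]
      rw [lintegral_lintegral_swap
        ((((measurable_gaussianPDF m1 v1).comp measurable_fst).mul hjoint).aemeasurable)]
    simp only [Pi.mul_apply]
    rw [hswap]
    have hinner : ∀ z : ℝ, ∫⁻ x, gaussianPDF m1 v1 x * gaussianPDF (m2 + x) v2 z
        = ENNReal.ofReal (∫ x, gaussianPDFReal m1 v1 x * gaussianPDFReal m2 v2 (z - x)) := by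
      intro z
      have hptw : ∀ x : ℝ, gaussianPDF m1 v1 x * gaussianPDF (m2 + x) v2 z
          = ENNReal.ofReal (gaussianPDFReal m1 v1 x * gaussianPDFReal m2 v2 (z - x)) := by
        intro x
        have hre : gaussianPDFReal (m2 + x) v2 z = gaussianPDFReal m2 v2 (z - x) := by
          unfold gaussianPDFReal
          congr 2
          ring
        rw [gaussianPDF, gaussianPDF, hre,
          ← ENNReal.ofReal_mul (gaussianPDFReal_nonneg m1 v1 x)]
      simp_rw [hptw]
      rw [← ofReal_integral_eq_lintegral_ofReal]
      · have hbound : ∀ x : ℝ, ‖gaussianPDFReal m1 v1 x * gaussianPDFReal m2 v2 (z - x)‖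
            ≤ (Real.sqrt (2 * π * v2))⁻¹ * gaussianPDFReal m1 v1 x := by
          intro x
          rw [Real.norm_eq_abs, abs_of_nonneg (mul_nonneg (gaussianPDFReal_nonneg _ _ _)
            (gaussianPDFReal_nonneg _ _ _)), mul_comm ((Real.sqrt (2 * π * (v2:ℝ)))⁻¹)]
          refine mul_le_mul_of_nonneg_left ?_ (gaussianPDFReal_nonneg _ _ _)
          unfold gaussianPDFReal
          calc (Real.sqrt (2 * π * v2))⁻¹ * Real.exp (-(z - x - m2) ^ 2 / (2 * v2))
              ≤ (Real.sqrt (2 * π * v2))⁻¹ * 1 := by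
                refine mul_le_mul_of_nonneg_left ?_ (by positivity)
                rw [Real.exp_le_one_iff]
                have h2v : (0:ℝ) < 2 * v2 := by
                  have : (0:ℝ) < v2 := by exact_mod_cast (zero_lt_iff.mpr h2)
                  linarith
                exact div_nonpos_of_nonpos_of_nonneg (neg_nonpos.2 (sq_nonneg _)) h2v.le
            _ = (Real.sqrt (2 * π * v2))⁻¹ := mul_one _
        refine Integrable.mono' (((integrable_gaussianPDFReal m1 v1).const_mul _))
          ?_ (ae_of_all _ hbound)
        refine ((measurable_gaussianPDFReal m1 v1).mul
          ((measurable_gaussianPDFReal m2 v2).comp (measurable_const.sub measurable_id))).aestronglyMeasurable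
      · exact ae_of_all _ fun x => mul_nonneg (gaussianPDFReal_nonneg _ _ _)
          (gaussianPDFReal_nonneg _ _ _)
    simp_rw [hinner, pdf_conv_s15 _ _ _ h1 h2]
    rw [gaussianReal_apply_eq_integral _ hsum s]
    rw [← ofReal_integral_eq_lintegral_ofReal (integrable_gaussianPDFReal _ _).restrict
      (ae_of_all _ fun x => gaussianPDFReal_nonneg _ _ _)]

lemma pi_map_weighted_sum : ∀ (n : ℕ) (c m : Fin n → ℝ), (∀ i, c i = 1 ∨ c i = -1) →
    (Measure.pi fun i => gaussianReal (m i) 1).map (fun w => ∑ i, c i * w i)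
      = gaussianReal (∑ i, c i * m i) (n : ℝ≥0) := by
  intro n
  induction n with
  | zero =>
    intro c m _
    rw [Measure.pi_of_empty, Measure.map_dirac' (by fun_prop)]
    simp [gaussianReal_zero_var]
  | succ n ih =>
    intro c m hc
    have hMP := measurePreserving_piFinSuccAbove (fun i : Fin (n+1) => gaussianReal (m i) 1) 0
    set e := MeasurableEquiv.piFinSuccAbove (fun _ : Fin (n+1) => ℝ) 0 with he_def
    set F : ℝ × (Fin n → ℝ) → ℝ :=
      fun q => c 0 * q.1 + ∑ j : Fin n, c j.succ * q.2 j with hF_def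
    have hF : Measurable F := by fun_prop
    have hcomp : (fun w : Fin (n+1) → ℝ => ∑ i, c i * w i) = F ∘ e := by
      funext w
      simp only [Function.comp_apply, he_def, hF_def,
        MeasurableEquiv.piFinSuccAbove_apply, Fin.insertNthEquiv, Fin.succAbove_zero]
      rw [Fin.sum_univ_succ]
      rfl
    rw [hcomp, ← Measure.map_map hF e.measurable, hMP.map_eq]
    have hsplit : F = (fun q : ℝ × ℝ => q.1 + q.2)
        ∘ Prod.map (fun a : ℝ => c 0 * a) (fun t : Fin n → ℝ => ∑ j, c j.succ * t j) := rfl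
    have hg : Measurable (fun t : Fin n → ℝ => ∑ j, c j.succ * t j) := by fun_prop
    rw [hsplit, ← Measure.map_map measurable_add
      (Measurable.prodMap (measurable_const_mul (c 0)) hg),
      ← Measure.map_prod_map _ _ (measurable_const_mul (c 0)) hg]
    have hm0 : (gaussianReal (m 0) 1).map (fun a : ℝ => c 0 * a)
        = gaussianReal (c 0 * m 0) 1 := by
      have := gaussianReal_map_const_mul (μ := m 0) (v := 1) (c 0)
      have hone : (⟨c 0 ^ 2, sq_nonneg _⟩ : ℝ≥0) * 1 = 1 := by
        rcases hc 0 with h | h <;>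
        · ext
          rw [h]
          norm_num
      convert this using 2
      exact hone.symm
    have htail : (Measure.pi fun j : Fin n => gaussianReal (m ((0 : Fin (n+1)).succAbove j)) 1).map
        (fun t : Fin n → ℝ => ∑ j, c j.succ * t j)
        = gaussianReal (∑ j : Fin n, c j.succ * m j.succ) (n : ℝ≥0) := by
      simp only [Fin.succAbove_zero]
      exact ih (fun j => c j.succ) (fun j => m j.succ) (fun j => hc j.succ)
    rw [hm0, htail, gauss_conv_s15 _ _ _ _ one_ne_zero]
    congr 1
    · rw [Fin.sum_univ_succ]
    · push_cast
      ring

lemma inner_integral_eq {X : Type*} {n : ℕ} (hn : 0 < n) (f : Fin n → X → ℝ)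
    (hf : ∀ i x, f i x = 1 ∨ f i x = -1) (p : Fin n → ℝ) (x : X) (y : ℝ)
    (hy : y = 1 ∨ y = -1) :
    ∫ w, signLoss f w x y ∂(gaussPi p)
      = Phi ((y * ∑ i, p i * f i x) / Real.sqrt n) := by
  set c : Fin n → ℝ := fun i => y * f i x with hc_def
  have hci : ∀ i, c i = 1 ∨ c i = -1 := by
    intro i
    rcases hy with hy | hy <;> rcases hf i x with h | h <;>
      simp [hc_def, hy, h]
  have hT : Measurable (fun w : Fin n → ℝ => ∑ i, c i * w i) := by fun_prop
  have hrw : ∀ w : Fin n → ℝ, y * ∑ i, w i * f i x = ∑ i, c i * w i := by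
    intro w
    rw [Finset.mul_sum]
    exact Finset.sum_congr rfl fun i _ => by simp [hc_def]; ring
  have hind : (fun w => signLoss f w x y)
      = Set.indicator {w : Fin n → ℝ | ∑ i, c i * w i ≤ 0} (fun _ => 1) := by
    funext w
    simp only [signLoss, hrw w, Set.indicator_apply, Set.mem_setOf_eq]
  have hSmeas : MeasurableSet {w : Fin n → ℝ | ∑ i, c i * w i ≤ 0} :=
    hT measurableSet_Iic
  rw [hind, integral_indicator (μ := gaussPi p) hSmeas]
  rw [setIntegral_const]
  have hS : (gaussPi p) {w : Fin n → ℝ | ∑ i, c i * w i ≤ 0}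
      = ENNReal.ofReal (∫ z in Iic (0:ℝ),
          gaussianPDFReal (∑ i, c i * p i) (n : ℝ≥0) z) := by
    have hpre : {w : Fin n → ℝ | ∑ i, c i * w i ≤ 0}
        = (fun w : Fin n → ℝ => ∑ i, c i * w i) ⁻¹' (Iic 0) := rfl
    rw [hpre, ← Measure.map_apply hT measurableSet_Iic]
    rw [show (gaussPi p) = Measure.pi fun i => gaussianReal (p i) 1 from rfl]
    rw [pi_map_weighted_sum n c p hci]
    exact gaussianReal_apply_eq_integral _ (by exact_mod_cast hn.ne') _
  rw [measureReal_def, hS, ENNReal.toReal_ofReal (integral_nonneg fun z => gaussianPDFReal_nonneg _ _ _)]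
  rw [integral_gaussianPDFReal_Iic_zero _ (by exact_mod_cast hn.ne' : (n:ℝ≥0) ≠ 0)]
  rw [smul_eq_mul, mul_one]
  congr 2
  rw [Finset.mul_sum]
  exact Finset.sum_congr rfl fun i _ => by simp [hc_def]; ring

end AuxProofs

section AuxMain
open Real Set
open scoped NNReal

theorem binary_gaussian_s2d_conditional_risks
    {X : Type*} [MeasurableSpace X]
    {n : ℕ} (hn : 0 < n) (f : Fin n → X → ℝ)
    (hf : ∀ i x, f i x = 1 ∨ f i x = -1)
    (hfm : ∀ i, Measurable (f i))
    (p : Fin n → ℝ)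
    (D : Measure (X × ℝ)) [IsProbabilityMeasure D]
    (hD : ∀ᵐ z ∂D, z.2 = 1 ∨ z.2 = -1)
    (hpos0 : D {z | signLoss f p z.1 z.2 = 0} ≠ 0)
    (hpos1 : D {z | signLoss f p z.1 z.2 = 1} ≠ 0) :
    -- c_D^{N(p,I)}(h_p) = 1 − E[Φ(|p·f(x)|/‖f(x)‖) | y·(p·f(x)) ≤ 0]
    (∫ z, (∫ w, signLoss f w z.1 z.2 ∂(gaussPi p))
        ∂(D[|{z | signLoss f p z.1 z.2 = 1}]))
      = 1 - (∫ z, Phi (|∑ i, p i * f i z.1| / Real.sqrt (∑ i, f i z.1 ^ 2))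
          ∂(D[|{z | z.2 * ∑ i, p i * f i z.1 ≤ 0}])) ∧
    -- b_D^{N(p,I)}(h_p) = E[Φ(|p·f(x)|/‖f(x)‖) | y·(p·f(x)) > 0]
    (∫ z, (∫ w, signLoss f w z.1 z.2 ∂(gaussPi p))
        ∂(D[|{z | signLoss f p z.1 z.2 = 0}]))
      = (∫ z, Phi (|∑ i, p i * f i z.1| / Real.sqrt (∑ i, f i z.1 ^ 2))
          ∂(D[|{z | 0 < z.2 * ∑ i, p i * f i z.1}])) := by
  -- notation
  set Sμ : X × ℝ → ℝ := fun z => ∑ i, p i * f i z.1 with hSμ_def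
  have hSmeas : Measurable Sμ :=
    Finset.measurable_sum _ fun i _ => (measurable_const.mul ((hfm i).comp measurable_fst))
  have hprod : Measurable fun z : X × ℝ => z.2 * Sμ z := measurable_snd.mul hSmeas
  have hB1meas : MeasurableSet {z : X × ℝ | z.2 * Sμ z ≤ 0} := hprod measurableSet_Iic
  have hB0meas : MeasurableSet {z : X × ℝ | 0 < z.2 * Sμ z} := hprod measurableSet_Ioi
  have hset1 : {z : X × ℝ | signLoss f p z.1 z.2 = 1} = {z | z.2 * Sμ z ≤ 0} := by
    ext z
    simp only [Set.mem_setOf_eq, signLoss, hSμ_def]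
    rcases le_or_gt (z.2 * ∑ i, p i * f i z.1) 0 with h | h
    · rw [if_pos h]; simp [h]
    · rw [if_neg (not_le.2 h)]; simp [h]
  have hset0 : {z : X × ℝ | signLoss f p z.1 z.2 = 0} = {z | 0 < z.2 * Sμ z} := by
    ext z
    simp only [Set.mem_setOf_eq, signLoss, hSμ_def]
    rcases le_or_gt (z.2 * ∑ i, p i * f i z.1) 0 with h | h
    · rw [if_pos h]; simp [h, not_lt.2 h]
    · rw [if_neg (not_le.2 h)]; simp [h]
  rw [hset1] at hpos1
  rw [hset0] at hpos0
  have hss : ∀ x : X, Real.sqrt (∑ i, f i x ^ 2) = Real.sqrt n := by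
    intro x
    congr 1
    rw [Finset.sum_congr rfl (fun i _ => by rcases hf i x with h | h <;> rw [h] <;> norm_num :
      ∀ i ∈ Finset.univ, f i x ^ 2 = 1)]
    simp
  have hφmeas : Measurable fun z : X × ℝ => Phi (|Sμ z| / Real.sqrt n) :=
    continuous_Phi.measurable.comp (hSmeas.abs.div_const _)
  have hφbound : ∀ z : X × ℝ, ‖Phi (|Sμ z| / Real.sqrt n)‖ ≤ 1 := fun z =>
    abs_le.2 ⟨by linarith [Phi_nonneg (|Sμ z| / Real.sqrt n)], Phi_le_one _⟩
  constructor
  · -- c-case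
    haveI : IsProbabilityMeasure (D[|{z : X × ℝ | z.2 * Sμ z ≤ 0}]) :=
      cond_isProbabilityMeasure hpos1
    rw [hset1]
    have hmem : ∀ᵐ z ∂(D[|{z : X × ℝ | z.2 * Sμ z ≤ 0}]), z ∈ {z : X × ℝ | z.2 * Sμ z ≤ 0} := by
      unfold ProbabilityTheory.cond
      exact (Measure.ae_smul_measure (ae_restrict_mem hB1meas) _)
    have hy : ∀ᵐ z ∂(D[|{z : X × ℝ | z.2 * Sμ z ≤ 0}]), z.2 = 1 ∨ z.2 = -1 := by
      unfold ProbabilityTheory.cond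
      exact (Measure.ae_smul_measure (ae_restrict_of_ae hD) _)
    have hae : ∀ᵐ z ∂(D[|{z : X × ℝ | z.2 * Sμ z ≤ 0}]),
        (∫ w, signLoss f w z.1 z.2 ∂(gaussPi p)) = 1 - Phi (|Sμ z| / Real.sqrt n) := by
      filter_upwards [hmem, hy] with z hz hzy
      rw [inner_integral_eq hn f hf p z.1 z.2 hzy]
      have habs : z.2 * Sμ z = -(|Sμ z|) := by
        have h1 : |z.2 * Sμ z| = |Sμ z| := by
          rcases hzy with h | h <;> rw [h] <;> simp
        rw [← h1, abs_of_nonpos (hz : z.2 * Sμ z ≤ 0), neg_neg]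
      rw [habs, neg_div, Phi_neg]
    rw [integral_congr_ae hae]
    rw [integral_sub (integrable_const 1)
      (Integrable.mono' (integrable_const 1) hφmeas.aestronglyMeasurable
        (ae_of_all _ hφbound))]
    simp only [integral_const, measure_univ, probReal_univ, ENNReal.toReal_one, one_smul, smul_eq_mul, one_mul]
    congr 1
    refine integral_congr_ae (ae_of_all _ fun z => ?_)
    simp only [hSμ_def]
    rw [hss z.1]
  · -- b-case
    haveI : IsProbabilityMeasure (D[|{z : X × ℝ | 0 < z.2 * Sμ z}]) :=
      cond_isProbabilityMeasure hpos0
    rw [hset0]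
    have hmem : ∀ᵐ z ∂(D[|{z : X × ℝ | 0 < z.2 * Sμ z}]), z ∈ {z : X × ℝ | 0 < z.2 * Sμ z} := by
      unfold ProbabilityTheory.cond
      exact (Measure.ae_smul_measure (ae_restrict_mem hB0meas) _)
    have hy : ∀ᵐ z ∂(D[|{z : X × ℝ | 0 < z.2 * Sμ z}]), z.2 = 1 ∨ z.2 = -1 := by
      unfold ProbabilityTheory.cond
      exact (Measure.ae_smul_measure (ae_restrict_of_ae hD) _)
    have hae : ∀ᵐ z ∂(D[|{z : X × ℝ | 0 < z.2 * Sμ z}]),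
        (∫ w, signLoss f w z.1 z.2 ∂(gaussPi p)) = Phi (|Sμ z| / Real.sqrt n) := by
      filter_upwards [hmem, hy] with z hz hzy
      rw [inner_integral_eq hn f hf p z.1 z.2 hzy]
      have habs : z.2 * Sμ z = |Sμ z| := by
        have h1 : |z.2 * Sμ z| = |Sμ z| := by
          rcases hzy with h | h <;> rw [h] <;> simp
        rw [← h1, abs_of_pos (hz : 0 < z.2 * Sμ z)]
      rw [habs]
    rw [integral_congr_ae hae]
    refine integral_congr_ae (ae_of_all _ fun z => ?_)
    simp only [hSμ_def]
    rw [hss z.1]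

end AuxMain
end

section
/- Let Y = {−1, +1}, let f_1,...,f_n: X→{−1,+1} be base classifiers, let p ∈ R^n, and let N(p, I) be the n-dimensional Gaussian distribution with mean p and identity covariance. Let {p₁, p₂} be an optimal solution of the partition problem applied to p, and set p̄ = |Σ_{p∈p₁} p − Σ_{p∈p₂} p|. Then for any data distribution D over X×{−1,+1}: c_D^{N(p,I)}(h_p) ≥ 1 − Φ( p̄ / √n ), where Φ(k) = (1/2)(1 − erf(k/√2)). -/
/-!
STATEMENT 16 (Weights partitioning lower bound -- binary Gaussian).
For base classifiers `f_i : X → {−1,+1}`, `p ∈ ℝ^n`, `N(p,I)` the Gaussian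
with mean `p` and identity covariance, and `{p₁,p₂}` (encoded by `T` and `Tᶜ`)
an optimal solution of the partition problem applied to `p`, setting
`p̄ = |∑_{p∈p₁} p − ∑_{p∈p₂} p|`:
`c_D^{N(p,I)}(h_p) ≥ 1 − Φ(p̄/√n)`, where `Φ(k) = ½(1 − erf(k/√2))`.
-/

open MeasureTheory ProbabilityTheory
open scoped ENNReal

open MeasureTheory ProbabilityTheory Real

lemma gpdf_mul_ident (a b t x u v : ℝ) (hu : 0 < u) (hv : 0 < v) :
    ((Real.sqrt (2*π*u))⁻¹ * Real.exp (-(x-a)^2/(2*u))) *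
    ((Real.sqrt (2*π*v))⁻¹ * Real.exp (-((t-x)-b)^2/(2*v)))
    = ((Real.sqrt (2*π*(u+v)))⁻¹ * Real.exp (-(t-(a+b))^2/(2*(u+v)))) *
      ((Real.sqrt (2*π*(u*v/(u+v))))⁻¹ *
        Real.exp (-(x-(v*a + u*(t-b))/(u+v))^2/(2*(u*v/(u+v))))) := by
  have huv : 0 < u + v := by linarith
  have hconst : (Real.sqrt (2*π*u))⁻¹ * (Real.sqrt (2*π*v))⁻¹
      = (Real.sqrt (2*π*(u+v)))⁻¹ * (Real.sqrt (2*π*(u*v/(u+v))))⁻¹ := by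
    rw [← mul_inv, ← mul_inv, ← Real.sqrt_mul (by positivity), ← Real.sqrt_mul (by positivity)]
    congr 1
    field_simp
  have hexp : Real.exp (-(x-a)^2/(2*u)) * Real.exp (-((t-x)-b)^2/(2*v))
      = Real.exp (-(t-(a+b))^2/(2*(u+v))) *
        Real.exp (-(x-(v*a + u*(t-b))/(u+v))^2/(2*(u*v/(u+v)))) := by
    rw [← Real.exp_add, ← Real.exp_add]
    congr 1
    field_simp
    ring
  calc _ = ((Real.sqrt (2*π*u))⁻¹ * (Real.sqrt (2*π*v))⁻¹) *
      (Real.exp (-(x-a)^2/(2*u)) * Real.exp (-((t-x)-b)^2/(2*v))) := by ring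
    _ = _ := by rw [hconst, hexp]; ring


open scoped ENNReal NNReal

lemma pdfReal_mul (a b t x : ℝ) (u v : ℝ≥0) (hu : u ≠ 0) (hv : v ≠ 0) :
    gaussianPDFReal a u x * gaussianPDFReal b v (t - x)
      = gaussianPDFReal (a+b) (u+v) t *
        gaussianPDFReal (((v:ℝ)*a + (u:ℝ)*(t-b))/((u:ℝ)+(v:ℝ))) (u*v/(u+v)) x := by
  have hu' : (0:ℝ) < u := by exact_mod_cast pos_iff_ne_zero.mpr hu
  have hv' : (0:ℝ) < v := by exact_mod_cast pos_iff_ne_zero.mpr hv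
  have h := gpdf_mul_ident a b t x u v hu' hv'
  unfold gaussianPDFReal
  push_cast
  convert h using 5 <;> push_cast <;> ring

lemma pdfReal_conv (a b t : ℝ) (u v : ℝ≥0) (hu : u ≠ 0) (hv : v ≠ 0) :
    ∫ x, gaussianPDFReal a u x * gaussianPDFReal b v (t - x)
      = gaussianPDFReal (a+b) (u+v) t := by
  have hw : u*v/(u+v) ≠ 0 := by
    have h1 : u + v ≠ 0 := by simp [hu]
    positivity
  simp_rw [pdfReal_mul a b t _ u v hu hv]
  rw [integral_const_mul, integral_gaussianPDFReal_eq_one _ hw, mul_one]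

lemma gaussianReal_conv (a b : ℝ) (u v : ℝ≥0) (hu : u ≠ 0) (hv : v ≠ 0) :
    Measure.map (fun z : ℝ × ℝ => z.1 + z.2)
        ((gaussianReal a u).prod (gaussianReal b v)) = gaussianReal (a + b) (u + v) := by
  have huv : u + v ≠ 0 := by simp [hu]
  ext s hs
  rw [Measure.map_apply measurable_add hs, gaussianReal_apply _ huv s,
    Measure.prod_apply (measurable_add hs)]
  have hsec : ∀ x : ℝ, (Prod.mk x ⁻¹' ((fun z : ℝ × ℝ => z.1 + z.2) ⁻¹' s))
      = (fun y => y + x) ⁻¹' s := by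
    intro x; ext y; simp [add_comm]
  have hinner : ∀ x : ℝ, gaussianReal b v ((fun y => y + x) ⁻¹' s)
      = ∫⁻ t, s.indicator (fun _ => (1:ℝ≥0∞)) t * gaussianPDF b v (t - x) := by
    intro x
    rw [gaussianReal_apply _ hv, ← lintegral_indicator (hs.preimage (measurable_add_const x)) _]
    have heq : ∀ y : ℝ, ((fun y => y + x) ⁻¹' s).indicator (gaussianPDF b v) y
        = (fun t => s.indicator (fun _ => (1:ℝ≥0∞)) t * gaussianPDF b v (t - x)) (y + x) := by
      intro y
      by_cases hmem : y + x ∈ s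
      · simp [Set.indicator_of_mem, hmem, Set.mem_preimage]
      · simp [Set.indicator_of_notMem, hmem, Set.mem_preimage]
    simp_rw [heq]
    exact lintegral_add_right_eq_self
      (fun t => s.indicator (fun _ => (1:ℝ≥0∞)) t * gaussianPDF b v (t - x)) x
  simp_rw [hsec, hinner]
  rw [gaussianReal_of_var_ne_zero _ hu]
  have hmeas2 : Measurable fun q : ℝ × ℝ =>
      s.indicator (fun _ => (1:ℝ≥0∞)) q.2 * gaussianPDF b v (q.2 - q.1) :=
    ((measurable_one.indicator hs).comp measurable_snd).mul
      ((measurable_gaussianPDF b v).comp (measurable_snd.sub measurable_fst))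
  rw [lintegral_withDensity_eq_lintegral_mul _ (measurable_gaussianPDF a u)
    (by exact hmeas2.lintegral_prod_right')]
  have hindt : ∀ t : ℝ, s.indicator (fun _ => (1:ℝ≥0∞)) t ≠ ⊤ :=
    fun t => ((Set.indicator_le_self s _ t).trans_lt ENNReal.one_lt_top).ne
  have swap : ∫⁻ x, gaussianPDF a u x *
        ∫⁻ t, s.indicator (fun _ => (1:ℝ≥0∞)) t * gaussianPDF b v (t - x)
      = ∫⁻ t, s.indicator (fun _ => (1:ℝ≥0∞)) t *
        ∫⁻ x, gaussianPDF a u x * gaussianPDF b v (t - x) := by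
    have h1 : ∀ x : ℝ, gaussianPDF a u x *
          ∫⁻ t, s.indicator (fun _ => (1:ℝ≥0∞)) t * gaussianPDF b v (t - x)
        = ∫⁻ t, gaussianPDF a u x * (s.indicator (fun _ => (1:ℝ≥0∞)) t * gaussianPDF b v (t - x)) := by
      intro x
      rw [lintegral_const_mul' _ _ (by simp [gaussianPDF])]
    have h2 : ∀ t : ℝ, s.indicator (fun _ => (1:ℝ≥0∞)) t *
          ∫⁻ x, gaussianPDF a u x * gaussianPDF b v (t - x)
        = ∫⁻ x, gaussianPDF a u x * (s.indicator (fun _ => (1:ℝ≥0∞)) t * gaussianPDF b v (t - x)) := by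
      intro t
      rw [← lintegral_const_mul' _ _ (hindt t)]
      congr 1; ext x; ring
    simp_rw [h1, h2]
    refine lintegral_lintegral_swap ?_
    exact (((measurable_gaussianPDF a u).comp measurable_fst).mul
      (((measurable_one.indicator hs).comp measurable_snd).mul
        ((measurable_gaussianPDF b v).comp (measurable_snd.sub measurable_fst)))).aemeasurable
  simp only [Pi.mul_apply]
  rw [swap]
  have hpoint : ∀ t : ℝ, (∫⁻ x, gaussianPDF a u x * gaussianPDF b v (t - x))
      = gaussianPDF (a+b) (u+v) t := by
    intro t
    have hw : u*v/(u+v) ≠ 0 := by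
      have h1 : u + v ≠ 0 := by simp [hu]
      positivity
    calc ∫⁻ x, gaussianPDF a u x * gaussianPDF b v (t - x)
        = ∫⁻ x, ENNReal.ofReal (gaussianPDFReal a u x * gaussianPDFReal b v (t - x)) := by
          congr 1; ext x
          rw [gaussianPDF, gaussianPDF, ← ENNReal.ofReal_mul (gaussianPDFReal_nonneg _ _ _)]
      _ = ∫⁻ x, ENNReal.ofReal (gaussianPDFReal (a+b) (u+v) t) *
            gaussianPDF (((v:ℝ)*a + (u:ℝ)*(t-b))/((u:ℝ)+(v:ℝ))) (u*v/(u+v)) x := by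
          congr 1; ext x
          rw [pdfReal_mul a b t x u v hu hv,
            ENNReal.ofReal_mul (gaussianPDFReal_nonneg _ _ _)]
          rfl
      _ = ENNReal.ofReal (gaussianPDFReal (a+b) (u+v) t) := by
          rw [lintegral_const_mul' _ _ ENNReal.ofReal_ne_top,
            lintegral_gaussianPDF_eq_one _ hw, mul_one]
      _ = gaussianPDF (a+b) (u+v) t := rfl
  simp_rw [hpoint]
  rw [← lintegral_indicator hs _]
  congr 1; ext t
  by_cases hmem : t ∈ s
  · simp [Set.indicator_of_mem, hmem]
  · simp [Set.indicator_of_notMem, hmem]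

lemma gaussianReal_conv' (a b : ℝ) (u v : ℝ≥0) (hu : u ≠ 0) :
    Measure.map (fun z : ℝ × ℝ => z.1 + z.2)
        ((gaussianReal a u).prod (gaussianReal b v)) = gaussianReal (a + b) (u + v) := by
  by_cases hv : v = 0
  · subst hv
    rw [gaussianReal_zero_var, Measure.prod_dirac, Measure.map_map measurable_add (by fun_prop)]
    have : ((fun z : ℝ × ℝ => z.1 + z.2) ∘ fun x : ℝ => (x, b)) = (· + b) := rfl
    rw [this, gaussianReal_map_add_const, add_zero]
  · exact gaussianReal_conv a b u v hu hv

lemma pi_gauss_map : ∀ (n : ℕ) (p s : Fin n → ℝ), (∀ i, s i = 1 ∨ s i = -1) →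
    Measure.map (fun w : Fin n → ℝ => ∑ i, s i * w i)
      (Measure.pi fun i => gaussianReal (p i) 1) = gaussianReal (∑ i, s i * p i) (n : ℝ≥0) := by
  intro n
  induction n with
  | zero =>
    intro p s hs
    have : (fun w : Fin 0 → ℝ => ∑ i, s i * w i) = fun _ => (0:ℝ) := by
      ext w; simp
    rw [this, Measure.map_const]
    simp [gaussianReal_zero_var]
  | succ n ih =>
    intro p s hs
    have e := (measurePreserving_piFinSuccAbove
      (fun i : Fin (n+1) => gaussianReal (p i) 1) 0).symm
    rw [← e.map_eq, Measure.map_map (by fun_prop) (MeasurableEquiv.measurable _)]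
    have hcomp : ((fun w : Fin (n+1) → ℝ => ∑ i, s i * w i)
          ∘ (MeasurableEquiv.piFinSuccAbove (fun _ : Fin (n+1) => ℝ) 0).symm)
        = (fun q : ℝ × ℝ => q.1 + q.2)
          ∘ (Prod.map (fun x : ℝ => s 0 * x) (fun t : Fin n → ℝ => ∑ j, s j.succ * t j)) := by
      ext q
      obtain ⟨x, t⟩ := q
      have : (MeasurableEquiv.piFinSuccAbove (fun _ : Fin (n+1) => ℝ) 0).symm (x, t)
          = Fin.cons x t := by
        simp [MeasurableEquiv.piFinSuccAbove, Fin.insertNth_zero']; rfl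
      simp only [Function.comp_apply, this, Prod.map_apply]
      rw [Fin.sum_univ_succ]
      simp
    rw [hcomp, ← Measure.map_map measurable_add (by fun_prop),
      ← Measure.map_prod_map _ _ (by fun_prop) (by fun_prop)]
    have h0 : Measure.map (fun x : ℝ => s 0 * x) (gaussianReal (p 0) 1)
        = gaussianReal (s 0 * p 0) 1 := by
      rw [gaussianReal_map_const_mul]
      congr 1
      have : (s 0)^2 = 1 := by rcases hs 0 with h | h <;> rw [h] <;> norm_num
      ext
      simp [this]
    have htail : (fun j : Fin n => gaussianReal (p ((0:Fin (n+1)).succAbove j)) 1)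
        = fun j => gaussianReal (p j.succ) 1 := by
      ext1 j
      rw [Fin.succAbove_zero]
    rw [h0, htail, ih (fun j => p j.succ) (fun j => s j.succ) (fun j => hs j.succ),
      gaussianReal_conv' _ _ _ _ one_ne_zero]
    congr 1
    · rw [Fin.sum_univ_succ]
    · push_cast
      ring

lemma integral_Iic_shift (f : ℝ → ℝ) (c a : ℝ) :
    ∫ x in Set.Iic a, f (x + c) = ∫ x in Set.Iic (a + c), f x := by
  rw [← integral_indicator measurableSet_Iic, ← integral_indicator measurableSet_Iic]
  have heq : ∀ x : ℝ, (Set.Iic a).indicator (fun x => f (x + c)) x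
      = (fun y => (Set.Iic (a+c)).indicator f y) (x + c) := by
    intro x
    by_cases h : x ≤ a <;> simp [Set.indicator_apply, Set.mem_Iic, h]
  simp_rw [heq]
  exact integral_add_right_eq_self _ c

lemma gauss_pdf_half (v : ℝ≥0) (hv : v ≠ 0) :
    ∫ x in Set.Iic (0:ℝ), gaussianPDFReal 0 v x = 1/2 := by
  have htot := integral_gaussianPDFReal_eq_one 0 hv
  have hint := integrable_gaussianPDFReal 0 v
  have hsplit := intervalIntegral.integral_Iic_add_Ioi (hint.integrableOn (s := Set.Iic 0))
    (hint.integrableOn (s := Set.Ioi 0))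
  have heven : ∀ x : ℝ, gaussianPDFReal 0 v (-x) = gaussianPDFReal 0 v x := by
    intro x; simp [gaussianPDFReal]
  have hsym : ∫ x in Set.Ioi (0:ℝ), gaussianPDFReal 0 v x
      = ∫ x in Set.Iic (0:ℝ), gaussianPDFReal 0 v x := by
    have := integral_comp_neg_Ioi (0:ℝ) (gaussianPDFReal 0 v)
    simp_rw [heven] at this
    rw [this, neg_zero]
  rw [hsym, htot] at hsplit
  linarith

lemma gauss_cdf (m : ℝ) (v : ℝ≥0) (hv : v ≠ 0) :
    ((gaussianReal m v) (Set.Iic 0)).toReal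
      = 1/2 + (∫ u in (0:ℝ)..(-m / Real.sqrt (2*v)), Real.exp (-u^2)) / Real.sqrt π := by
  have hv' : (0:ℝ) < v := by exact_mod_cast pos_iff_ne_zero.mpr hv
  rw [gaussianReal_apply_eq_integral _ hv, ENNReal.toReal_ofReal
    (integral_nonneg fun x => gaussianPDFReal_nonneg _ _ _)]
  have hshift : ∀ x : ℝ, gaussianPDFReal m v x = gaussianPDFReal 0 v (x + (-m)) := by
    intro x; simp [gaussianPDFReal, sub_eq_add_neg]
  simp_rw [hshift]
  rw [integral_Iic_shift, zero_add]
  have hint := integrable_gaussianPDFReal 0 v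
  have hBB := intervalIntegral.integral_Iic_sub_Iic
    (hint.integrableOn (s := Set.Iic 0)) (hint.integrableOn (s := Set.Iic (-m)))
  rw [gauss_pdf_half v hv] at hBB
  have hC : ∫ t in (0:ℝ)..(-m), gaussianPDFReal 0 v t
      = (∫ u in (0:ℝ)..(-m / Real.sqrt (2*v)), Real.exp (-u^2)) / Real.sqrt π := by
    have hc : Real.sqrt (2*v) ≠ 0 := by positivity
    have hfc : ∀ t : ℝ, gaussianPDFReal 0 v t
        = (Real.sqrt (2*π*v))⁻¹ * Real.exp (-(t / Real.sqrt (2*v))^2) := by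
      intro t
      have : (t / Real.sqrt (2*v))^2 = t^2 / (2*v) := by
        rw [div_pow, Real.sq_sqrt (by positivity)]
      rw [gaussianPDFReal, this]
      ring_nf
    simp_rw [hfc]
    rw [intervalIntegral.integral_const_mul,
      intervalIntegral.integral_comp_div (fun u => Real.exp (-u^2)) hc, zero_div]
    have h2 : Real.sqrt (2*π*v) = Real.sqrt π * Real.sqrt (2*v) := by
      rw [← Real.sqrt_mul Real.pi_pos.le]
      congr 1; ring
    rw [smul_eq_mul, h2]
    have hπ : Real.sqrt π ≠ 0 := by positivity
    field_simp
  rw [hC] at hBB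
  linarith

noncomputable def expPrim (k : ℝ) : ℝ := ∫ u in (0:ℝ)..k, Real.exp (-u^2)

lemma expPrim_intervalIntegrable (c d : ℝ) :
    IntervalIntegrable (fun u : ℝ => Real.exp (-u^2)) MeasureTheory.volume c d :=
  (Continuous.intervalIntegrable (by continuity) c d)

lemma expPrim_mono : Monotone expPrim := by
  intro a b hab
  have h := intervalIntegral.integral_add_adjacent_intervals
    (expPrim_intervalIntegrable 0 a) (expPrim_intervalIntegrable a b)
  have h2 : 0 ≤ ∫ u in a..b, Real.exp (-u^2) :=
    intervalIntegral.integral_nonneg hab (fun u _ => (Real.exp_pos _).le)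
  unfold expPrim
  rw [← h]
  linarith

lemma expPrim_abs_le (k : ℝ) : |expPrim k| ≤ Real.sqrt π := by
  have hint : MeasureTheory.Integrable (fun x : ℝ => Real.exp (-x^2)) := by
    have := integrable_exp_neg_mul_sq (b := 1) one_pos
    simpa using this
  have h1 : |expPrim k| ≤ ∫ u in Set.uIoc 0 k, |Real.exp (-u^2)| :=
    by simpa [expPrim, Real.norm_eq_abs] using
      intervalIntegral.norm_integral_le_integral_norm_uIoc (a := (0:ℝ)) (b := k)
        (f := fun u : ℝ => Real.exp (-u^2)) (μ := MeasureTheory.volume)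
  have h2 : ∫ u in Set.uIoc 0 k, |Real.exp (-u^2)| ≤ ∫ u : ℝ, Real.exp (-u^2) := by
    have : ∀ u : ℝ, |Real.exp (-u^2)| = Real.exp (-u^2) := fun u => abs_of_pos (Real.exp_pos _)
    simp_rw [this]
    exact MeasureTheory.setIntegral_le_integral hint
      (Filter.Eventually.of_forall fun u => (Real.exp_pos _).le)
  have h3 : ∫ u : ℝ, Real.exp (-u^2) = Real.sqrt π := by
    have := integral_gaussian 1
    simpa using this
  linarith


theorem binary_gaussian_partition_lower_bound
    {X : Type*} [MeasurableSpace X]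
    {n : ℕ} (hn : 0 < n) (f : Fin n → X → ℝ)
    (hf : ∀ i x, f i x = 1 ∨ f i x = -1)
    (hfm : ∀ i, Measurable (f i))
    (p : Fin n → ℝ)
    (T : Finset (Fin n))
    (hT : ∀ T' : Finset (Fin n),
      |(∑ i ∈ T, p i) - ∑ i ∈ Tᶜ, p i| ≤ |(∑ i ∈ T', p i) - ∑ i ∈ T'ᶜ, p i|)
    (D : Measure (X × ℝ)) [IsProbabilityMeasure D]
    (hD : ∀ᵐ z ∂D, z.2 = 1 ∨ z.2 = -1)
    (hpos1 : D {z | signLoss f p z.1 z.2 = 1} ≠ 0) :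
    1 - Phi (|(∑ i ∈ T, p i) - ∑ i ∈ Tᶜ, p i| / Real.sqrt n)
      ≤ ∫ z, (∫ w, signLoss f w z.1 z.2 ∂(gaussPi p))
          ∂(D[|{z | signLoss f p z.1 z.2 = 1}]) := by
  classical
  set pbar := |(∑ i ∈ T, p i) - ∑ i ∈ Tᶜ, p i| with hpbar_def
  have hpbar_nonneg : 0 ≤ pbar := abs_nonneg _
  set S := {z : X × ℝ | signLoss f p z.1 z.2 = 1} with hS_def
  set M : X × ℝ → ℝ := fun z => z.2 * ∑ i, p i * f i z.1 with hM_def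
  have hMmeas : Measurable M :=
    measurable_snd.mul (Finset.measurable_sum Finset.univ fun i _ =>
      measurable_const.mul ((hfm i).comp measurable_fst))
  have hSeq : S = M ⁻¹' (Set.Iic 0) := by
    ext z
    simp only [hS_def, Set.mem_setOf_eq, Set.mem_preimage, Set.mem_Iic, signLoss, hM_def]
    split_ifs with h
    · simp [h]
    · simp [h]
  have hSmeas : MeasurableSet S := hSeq ▸ hMmeas measurableSet_Iic
  have hn' : (n : ℝ≥0) ≠ 0 := Nat.cast_ne_zero.mpr hn.ne'
  have hsqrt2n : (0:ℝ) < Real.sqrt (2*(n:ℝ)) := Real.sqrt_pos.mpr (by positivity)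
  have hπ : (0:ℝ) < Real.sqrt π := Real.sqrt_pos.mpr Real.pi_pos
  have : IsProbabilityMeasure (D[|S]) := cond_isProbabilityMeasure hpos1
  -- inner integral formula
  have hinner : ∀ (x : X) (y : ℝ), (y = 1 ∨ y = -1) →
      ∫ w, signLoss f w x y ∂(gaussPi p)
        = 1/2 + expPrim (-(y * ∑ i, p i * f i x) / Real.sqrt (2*(n:ℝ))) / Real.sqrt π := by
    intro x y hy
    set s : Fin n → ℝ := fun i => y * f i x with hs_def
    have hs : ∀ i, s i = 1 ∨ s i = -1 := by
      intro i
      rcases hy with hy | hy <;> rcases hf i x with hfi | hfi <;> simp [hs_def, hy, hfi]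
    have hconv : ∀ w : Fin n → ℝ, y * ∑ i, w i * f i x = ∑ i, s i * w i := by
      intro w
      rw [Finset.mul_sum]
      exact Finset.sum_congr rfl fun i _ => by rw [hs_def]; ring
    have hsum_meas : Measurable fun w : Fin n → ℝ => ∑ i, s i * w i :=
      Finset.measurable_sum Finset.univ fun i _ =>
        measurable_const.mul (measurable_pi_apply i)
    have hA : MeasurableSet {w : Fin n → ℝ | ∑ i, s i * w i ≤ 0} :=
      measurableSet_le hsum_meas measurable_const
    have hind : ∀ w, signLoss f w x y
        = Set.indicator {w : Fin n → ℝ | ∑ i, s i * w i ≤ 0} (fun _ => (1:ℝ)) w := by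
      intro w
      rw [signLoss, hconv w]
      by_cases h : ∑ i, s i * w i ≤ 0 <;> simp [Set.indicator_apply, h]
    simp_rw [hind]
    rw [MeasureTheory.integral_indicator hA, MeasureTheory.setIntegral_const, smul_eq_mul,
      mul_one]
    have hmap : gaussPi p {w | ∑ i, s i * w i ≤ 0}
        = gaussianReal (∑ i, s i * p i) (n:ℝ≥0) (Set.Iic 0) := by
      have hpre : {w : Fin n → ℝ | ∑ i, s i * w i ≤ 0}
          = (fun w : Fin n → ℝ => ∑ i, s i * w i) ⁻¹' (Set.Iic 0) := rfl
      rw [hpre, show gaussPi p = Measure.pi fun i => gaussianReal (p i) 1 from rfl,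
        ← Measure.map_apply hsum_meas measurableSet_Iic, pi_gauss_map n p s hs]
    rw [measureReal_def, hmap, gauss_cdf _ _ hn']
    have hm : ∑ i, s i * p i = y * ∑ i, p i * f i x := by
      rw [Finset.mul_sum]
      exact Finset.sum_congr rfl fun i _ => by rw [hs_def]; ring
    rw [hm]
    norm_num [expPrim]
  -- value of the constant
  have hc0 : 1 - Phi (pbar / Real.sqrt n)
      = 1/2 + expPrim (pbar / Real.sqrt (2*(n:ℝ))) / Real.sqrt π := by
    unfold Phi erf
    have h2n : Real.sqrt (2*(n:ℝ)) = Real.sqrt 2 * Real.sqrt n :=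
      Real.sqrt_mul (by norm_num) _
    have harg : pbar / Real.sqrt n / Real.sqrt 2 = pbar / Real.sqrt (2*(n:ℝ)) := by
      rw [div_div, h2n, mul_comm]
    rw [harg]
    have hπ' : Real.sqrt π ≠ 0 := hπ.ne'
    unfold expPrim
    field_simp
    ring
  set G : X × ℝ → ℝ :=
    fun z => 1/2 + expPrim (-(M z) / Real.sqrt (2*(n:ℝ))) / Real.sqrt π with hG_def
  have hGmeas : Measurable G := by
    apply Measurable.add measurable_const
    apply Measurable.div _ measurable_const
    exact expPrim_mono.measurable.comp (hMmeas.neg.div_const _)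
  set μ' := D[|S] with hμ'_def
  have hac : μ' ≪ D := cond_absolutelyContinuous
  have hae_y : ∀ᵐ z ∂μ', (z.2 = 1 ∨ z.2 = -1) := hD.filter_mono hac.ae_le
  have hae_S : ∀ᵐ z ∂μ', z ∈ S := by
    rw [MeasureTheory.ae_iff]
    have h1 : {z : X × ℝ | ¬ z ∈ S} = Sᶜ := rfl
    rw [h1, hμ'_def, ProbabilityTheory.cond_apply hSmeas, Set.inter_compl_self,
      measure_empty, mul_zero]
  have hgG : (fun z : X × ℝ => ∫ w, signLoss f w z.1 z.2 ∂(gaussPi p)) =ᵐ[μ'] G := by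
    filter_upwards [hae_y] with z hz
    rw [hinner z.1 z.2 hz]
  rw [MeasureTheory.integral_congr_ae hgG]
  have hGint : MeasureTheory.Integrable G μ' := by
    refine MeasureTheory.Integrable.mono' (MeasureTheory.integrable_const (1/2 + 1 : ℝ))
      hGmeas.aestronglyMeasurable (Filter.Eventually.of_forall fun z => ?_)
    have h1 := expPrim_abs_le (-(M z) / Real.sqrt (2*(n:ℝ)))
    have h2 : |expPrim (-(M z) / Real.sqrt (2*(n:ℝ))) / Real.sqrt π| ≤ 1 := by
      rw [abs_div, abs_of_pos hπ]
      exact (div_le_one hπ).mpr h1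
    rw [hG_def, Real.norm_eq_abs]
    calc |1/2 + expPrim (-(M z) / Real.sqrt (2*(n:ℝ))) / Real.sqrt π|
        ≤ |(1:ℝ)/2| + |expPrim (-(M z) / Real.sqrt (2*(n:ℝ))) / Real.sqrt π| := abs_add_le _ _
      _ ≤ 1/2 + 1 := by rw [abs_of_pos (by norm_num : (0:ℝ) < 1/2)]; linarith
  have hle : ∀ᵐ z ∂μ', (1 - Phi (pbar / Real.sqrt n)) ≤ G z := by
    filter_upwards [hae_y, hae_S] with z hy hzS
    have hM0 : M z ≤ 0 := by rw [hSeq] at hzS; exact hzS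
    have habs : pbar ≤ |M z| := by
      set T' : Finset (Fin n) := Finset.univ.filter (fun i => z.2 * f i z.1 = 1) with hT'
      have hs2 : ∀ i, z.2 * f i z.1 = 1 ∨ z.2 * f i z.1 = -1 := fun i => by
        rcases hy with h | h <;> rcases hf i z.1 with h2 | h2 <;> simp [h, h2]
      have hMz : M z = ∑ i, (z.2 * f i z.1) * p i := by
        simp only [hM_def, Finset.mul_sum]
        exact Finset.sum_congr rfl fun i _ => by ring
      have hsum := Finset.sum_filter_add_sum_filter_not Finset.univ
        (fun i => z.2 * f i z.1 = 1) (fun i => (z.2 * f i z.1) * p i)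
      have h1 : ∑ i ∈ Finset.univ.filter (fun i => z.2 * f i z.1 = 1),
          (z.2 * f i z.1) * p i = ∑ i ∈ T', p i :=
        Finset.sum_congr rfl fun i hi => by
          rw [Finset.mem_filter] at hi; rw [hi.2, one_mul]
      have h2 : ∑ i ∈ Finset.univ.filter (fun i => ¬ z.2 * f i z.1 = 1),
          (z.2 * f i z.1) * p i = -∑ i ∈ T'ᶜ, p i := by
        rw [hT', Finset.compl_filter, ← Finset.sum_neg_distrib]
        exact Finset.sum_congr rfl fun i hi => by
          rw [Finset.mem_filter] at hi
          rcases hs2 i with h | h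
          · exact absurd h hi.2
          · rw [h]; ring
      have hsplit : (∑ i ∈ T', p i) - ∑ i ∈ T'ᶜ, p i = M z := by
        rw [hMz, ← hsum, h1, h2]; ring
      calc pbar ≤ |(∑ i ∈ T', p i) - ∑ i ∈ T'ᶜ, p i| := hT T'
        _ = |M z| := by rw [hsplit]
    have hmle : pbar ≤ -(M z) := by
      rw [abs_of_nonpos hM0] at habs; exact habs
    rw [hc0]
    simp only [hG_def]
    have hdiv : pbar / Real.sqrt (2*(n:ℝ)) ≤ -(M z) / Real.sqrt (2*(n:ℝ)) := by
      gcongr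
    have hkey := expPrim_mono hdiv
    have h5 : expPrim (pbar / Real.sqrt (2*(n:ℝ))) / Real.sqrt π
        ≤ expPrim (-(M z) / Real.sqrt (2*(n:ℝ))) / Real.sqrt π := by gcongr
    linarith
  calc 1 - Phi (pbar / Real.sqrt n)
      = ∫ _z, (1 - Phi (pbar / Real.sqrt n)) ∂μ' := by
        rw [MeasureTheory.integral_const, probReal_univ, one_smul]
    _ ≤ ∫ z, G z ∂μ' :=
        MeasureTheory.integral_mono_ae (MeasureTheory.integrable_const _) hGint hle
end
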